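/- arXiv:math/0406134 — 2 statements merged into one kernel-verified Lean document; each statement's English description precedes it below -/
import Mathlib

section
/- For any two real 2-uniform (n,k)-frames F₁ and F₂, the number of 3-element vertex subsets of G_{F₁} inducing a complete bipartite subgraph equals the corresponding number for G_{F₂}; this common number E₃ depends only on n and k. Consequently, e_3^p(F₁) = e_3^p(F₂) for every 2 ≤ p < ∞, with e_3^p(F) = ( C(n,3)^{-1} [ (k/n + 2c_{n,k})^p · E₃ + (k/n + c_{n,k})^p · (C(n,3) − E₃) ] )^{1/p}. -/
open scoped RealInnerProductSpace
set_option maxHeartbeats 1000000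
set_option synthInstance.maxHeartbeats 400000


open Matrix
open scoped Classical

noncomputable section

namespace FramesErasures

/-- The constant `c_{n,k} = sqrt(k(n-k)/(n^2(n-1)))`. -/
noncomputable def c (n k : ℕ) : ℝ :=
  Real.sqrt ((k : ℝ) * ((n : ℝ) - k) / ((n : ℝ) ^ 2 * ((n : ℝ) - 1)))

/-- Operator norm (ℓ²→ℓ²) of a square real matrix. -/
noncomputable def opNorm {k : ℕ} (A : Matrix (Fin k) (Fin k) ℝ) : ℝ :=
  ‖Matrix.toEuclideanCLM (𝕜 := ℝ) A‖

/-- The diagonal 0-1 matrix with 1's exactly at the positions in `S`. -/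
def diagS {n : ℕ} (S : Finset (Fin n)) : Matrix (Fin n) (Fin n) ℝ :=
  Matrix.diagonal fun i => if i ∈ S then 1 else 0

/-- `e_m^∞(F)`: the maximal norm of an error operator for `m` erasures. -/
noncomputable def errInf {n k : ℕ} (V : Matrix (Fin n) (Fin k) ℝ) (m : ℕ) : ℝ :=
  sSup {x : ℝ | ∃ S : Finset (Fin n), S.card = m ∧ x = opNorm (Vᵀ * diagS S * V)}

/-- `e_m^p(F)`: the ℓᵖ-average of the norms of the error operators for `m` erasures. -/
noncomputable def errP {n k : ℕ} (V : Matrix (Fin n) (Fin k) ℝ) (m : ℕ) (p : ℝ) : ℝ :=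
  ((n.choose m : ℝ)⁻¹ *
      ∑ S ∈ Finset.univ.filter fun S : Finset (Fin n) => S.card = m,
        opNorm (Vᵀ * diagS S * V) ^ p) ^ (1 / p)

/-- A Parseval frame is uniform if all diagonal Grammian entries equal `k/n`. -/
def Uniform (n k : ℕ) (V : Matrix (Fin n) (Fin k) ℝ) : Prop :=
  ∀ j, (V * Vᵀ) j j = (k : ℝ) / n

/-- 2-uniformity, via the equiangularity characterization. -/
def TwoUniform (n k : ℕ) (V : Matrix (Fin n) (Fin k) ℝ) : Prop :=
  Uniform n k V ∧ ∀ i j, i ≠ j → |(V * Vᵀ) i j| = c n k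

/-- The `n×n` all-ones matrix. -/
def Jmat (n : ℕ) : Matrix (Fin n) (Fin n) ℝ :=
  Matrix.of fun _ _ => 1

/-- A real 2-uniform `(n,k)`-frame, given by its analysis operator and signature matrix. -/
structure TwoUniformFrame (n k : ℕ) where
  V : Matrix (Fin n) (Fin k) ℝ
  Q : Matrix (Fin n) (Fin n) ℝ
  parseval : Vᵀ * V = 1
  symm : Qᵀ = Q
  diag : ∀ i, Q i i = 0
  offdiag : ∀ i j, i ≠ j → Q i j = 1 ∨ Q i j = -1
  gram : V * Vᵀ = ((k : ℝ) / n) • (1 : Matrix (Fin n) (Fin n) ℝ) + c n k • Q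

/-- The graph associated with a 2-uniform frame: `i ≠ j` adjacent iff `Q i j = -1`. -/
def frameGraph {n k : ℕ} (F : TwoUniformFrame n k) : SimpleGraph (Fin n) where
  Adj i j := i ≠ j ∧ F.Q i j = -1
  symm := by
    constructor
    intro i j h
    refine ⟨h.1.symm, ?_⟩
    have h2 : F.Q i j = F.Q j i := by
      have := congrFun (congrFun F.symm j) i
      simpa [Matrix.transpose_apply] using this
    rw [← h2]
    exact h.2
  loopless := ⟨fun i h => h.1 rfl⟩

/-- A graph is complete bipartite (with one part possibly empty). -/
def IsCompleteBipartite {α : Type*} (G : SimpleGraph α) : Prop :=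
  ∃ A : Set α, ∀ i j, G.Adj i j ↔ ((i ∈ A) ↔ (j ∉ A))

/-- `G` has an induced complete bipartite subgraph on `m` vertices. -/
def HasInducedCompleteBipartite {n : ℕ} (G : SimpleGraph (Fin n)) (m : ℕ) : Prop :=
  ∃ S : Finset (Fin n), S.card = m ∧
    IsCompleteBipartite (G.induce (S : Set (Fin n)))

/-- The Seidel adjacency matrix of a graph. -/
noncomputable def seidel {α : Type*} [DecidableEq α] (G : SimpleGraph α) : Matrix α α ℝ :=
  Matrix.of fun i j => if i = j then 0 else if G.Adj i j then -1 else 1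

/-- Switching equivalence of graphs: Seidel matrices conjugate by a product of a permutation
and a `±1` diagonal matrix. -/
def SwitchingEquivalent {α : Type*} [DecidableEq α] (G H : SimpleGraph α) : Prop :=
  ∃ (σ : Equiv.Perm α) (ε : α → ℝ), (∀ i, ε i = 1 ∨ ε i = -1) ∧
    ∀ i j, seidel H i j = ε i * ε j * seidel G (σ i) (σ j)

/-- `G ∈ 𝒢_m^(s)`: the minimal number of edges in the switching class of `G` equals `s`. -/
def MinSwitchEdges {α : Type*} [DecidableEq α] (G : SimpleGraph α) (s : ℕ) : Prop :=
  IsLeast {t : ℕ | ∃ H : SimpleGraph α, SwitchingEquivalent G H ∧ H.edgeSet.ncard = t} s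

/-- `lam` is the largest eigenvalue of the real matrix `A`. -/
def IsMaxEigenvalue {m : ℕ} (A : Matrix (Fin m) (Fin m) ℝ) (lam : ℝ) : Prop :=
  (∃ v : Fin m → ℝ, v ≠ 0 ∧ A.mulVec v = lam • v) ∧
  ∀ μ : ℝ, (∃ v : Fin m → ℝ, v ≠ 0 ∧ A.mulVec v = μ • v) → μ ≤ lam

/-- A 2-uniform frame is 3-uniform if the error norm is the same for all triple erasures. -/
def ThreeUniform {n k : ℕ} (F : TwoUniformFrame n k) : Prop :=
  ∀ S T : Finset (Fin n), S.card = 3 → T.card = 3 →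
    opNorm (F.Vᵀ * diagS S * F.V) = opNorm (F.Vᵀ * diagS T * F.V)



lemma c_sq {n k : ℕ} (hk : 1 ≤ k) (hkn : k < n) :
    (c n k) ^ 2 = (k : ℝ) * ((n : ℝ) - k) / ((n : ℝ) ^ 2 * ((n : ℝ) - 1)) := by
  have hn : (2 : ℝ) ≤ n := by
    have : 2 ≤ n := lt_of_le_of_lt hk hkn
    exact_mod_cast this
  have h1 : (0:ℝ) ≤ (k : ℝ) * ((n : ℝ) - k) / ((n : ℝ) ^ 2 * ((n : ℝ) - 1)) := by
    have hk' : (0:ℝ) ≤ (k:ℝ) := by positivity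
    have : (k:ℝ) ≤ n := by exact_mod_cast hkn.le
    have h2 : (0:ℝ) ≤ (n:ℝ) - k := by linarith
    have h3 : (0:ℝ) < (n:ℝ) ^ 2 * ((n:ℝ) - 1) := by nlinarith
    positivity
  exact Real.sq_sqrt h1

lemma c_pos {n k : ℕ} (hk : 1 ≤ k) (hkn : k < n) : 0 < c n k := by
  have hn : (2 : ℝ) ≤ n := by
    have : 2 ≤ n := lt_of_le_of_lt hk hkn
    exact_mod_cast this
  have hk' : (1:ℝ) ≤ (k:ℝ) := by exact_mod_cast hk
  have hkn' : (k:ℝ) < n := by exact_mod_cast hkn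
  apply Real.sqrt_pos.2
  have h3 : (0:ℝ) < (n:ℝ) ^ 2 * ((n:ℝ) - 1) := by nlinarith
  apply div_pos (by nlinarith) h3

lemma c_le {n k : ℕ} (hk : 1 ≤ k) (hkn : k < n) : c n k ≤ 2 * ((k:ℝ)/n) := by
  have hn : (2 : ℝ) ≤ n := by
    have : 2 ≤ n := lt_of_le_of_lt hk hkn
    exact_mod_cast this
  have hk' : (1:ℝ) ≤ (k:ℝ) := by exact_mod_cast hk
  have hkn' : (k:ℝ) < n := by exact_mod_cast hkn
  have h : (c n k)^2 ≤ (2 * ((k:ℝ)/n))^2 := by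
    rw [c_sq hk hkn]
    rw [div_le_iff₀ (by nlinarith)]
    have : (2 * ((k:ℝ)/n))^2 = 4 * k^2 / n^2 := by ring
    rw [this]
    have hne : (4*(k:ℝ)^2/n^2) * (n^2*((n:ℝ)-1)) = 4*k^2*((n:ℝ)-1) := by
      field_simp
    rw [hne]
    nlinarith [mul_pos (by nlinarith : (0:ℝ) < (k:ℝ)) (by nlinarith : (0:ℝ) < (n:ℝ)-(k:ℝ))]
  have h1 : 0 ≤ 2 * ((k:ℝ)/n) := by positivity
  nlinarith [c_pos hk hkn]




variable {E : Type*} [NormedAddCommGroup E] [InnerProductSpace ℝ E] [CompleteSpace E]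

lemma inner_map_map (g : E →L[ℝ] E) (hg : _root_.IsSelfAdjoint g) (x y : E) :
    ⟪g x, y⟫ = ⟪x, g y⟫ := by
  have h : ContinuousLinearMap.adjoint g = g := by
    rw [← ContinuousLinearMap.star_eq_adjoint]; exact hg.star_eq
  conv_lhs => rw [← h]
  exact ContinuousLinearMap.adjoint_inner_left g y x

lemma norm_eq_of_cubic (f : E →L[ℝ] E) (hsa : _root_.IsSelfAdjoint f) {lam mu : ℝ}
    (hlam : 0 < lam) (hmul : -lam ≤ mu) (hlt : mu < lam)
    (h3 : f * (f * f) = (lam + mu) • (f * f) - (lam * mu) • f)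
    (hev : ∃ x : E, x ≠ 0 ∧ f x = lam • x) :
    ‖f‖ = lam := by
  have h4 : f * (f * (f * f)) = ((lam + mu)^2 - lam*mu) • (f * f)
      - ((lam + mu) * (lam * mu)) • f := by
    calc f * (f * (f * f)) = f * ((lam + mu) • (f * f) - (lam * mu) • f) := by rw [← h3]
    _ = (lam + mu) • (f * (f * f)) - (lam * mu) • (f * f) := by
        simp only [mul_sub, mul_smul_comm]
    _ = (lam + mu) • ((lam + mu) • (f * f) - (lam * mu) • f) - (lam * mu) • (f * f) := by
        rw [h3]
    _ = _ := by module
  set B := f * f - mu • f with hBdef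
  set C := lam • f - f * f with hCdef
  have hsaB : _root_.IsSelfAdjoint B := by
    simp only [_root_.IsSelfAdjoint, hBdef, star_sub, StarMul.star_mul, star_smul, hsa.star_eq, star_trivial]
  have hsaC : _root_.IsSelfAdjoint C := by
    simp only [_root_.IsSelfAdjoint, hCdef, star_sub, StarMul.star_mul, star_smul, hsa.star_eq, star_trivial]
  have hBC : B * C = 0 := by
    have e1 : B * C = (lam + mu) • (f * (f * f)) - f * (f * (f * f)) - (lam*mu) • (f * f) := by
      simp only [hBdef, hCdef, sub_mul, mul_sub, smul_mul_assoc, mul_smul_comm, smul_smul,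
        mul_assoc]
      module
    rw [e1, h4, h3]; module
  have hB2 : B * B = (lam * (lam - mu)) • B := by
    have e1 : B * B = f * (f * (f * f)) - (2*mu) • (f * (f * f)) + (mu*mu) • (f * f) := by
      simp only [hBdef, sub_mul, mul_sub, smul_mul_assoc, mul_smul_comm, smul_smul, mul_assoc]
      module
    rw [e1, h4, h3, hBdef]; module
  have hC2 : C * C = (mu * (lam - mu)) • C := by
    have e1 : C * C = f * (f * (f * f)) - (2*lam) • (f * (f * f)) + (lam*lam) • (f * f) := by
      simp only [hCdef, sub_mul, mul_sub, smul_mul_assoc, mul_smul_comm, smul_smul, mul_assoc]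
      module
    rw [e1, h4, h3, hCdef]; module
  have hBCf : B + C = (lam - mu) • f := by rw [hBdef, hCdef]; module
  -- upper bound
  have hub : ‖f‖ ≤ lam := by
    apply ContinuousLinearMap.opNorm_le_bound f hlam.le
    intro x
    set p : E := ((lam * (lam - mu))⁻¹) • (B x) with hpdef
    set q : E := if mu = 0 then 0 else ((mu * (lam - mu))⁻¹) • (C x) with hqdef
    have hlmne : lam - mu ≠ 0 := by intro h; linarith [sub_pos.mpr hlt]
    have hlmpos : 0 < lam * (lam - mu) := by nlinarith
    have hBBx : B (B x) = (lam * (lam - mu)) • (B x) := by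
      rw [← ContinuousLinearMap.mul_apply, hB2, ContinuousLinearMap.smul_apply]
    have hCCx : C (C x) = (mu * (lam - mu)) • (C x) := by
      rw [← ContinuousLinearMap.mul_apply, hC2, ContinuousLinearMap.smul_apply]
    have hBB : ⟪B x, B x⟫ = (lam * (lam - mu)) * ⟪x, B x⟫ := by
      rw [inner_map_map B hsaB x (B x), hBBx, real_inner_smul_right]
    have hCC : ⟪C x, C x⟫ = (mu * (lam - mu)) * ⟪x, C x⟫ := by
      rw [inner_map_map C hsaC x (C x), hCCx, real_inner_smul_right]
    have hpp : ⟪p, p⟫ = ⟪x, p⟫ := by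
      simp only [hpdef, real_inner_smul_left, real_inner_smul_right]
      rw [hBB]
      field_simp
    have hqq : ⟪q, q⟫ = ⟪x, q⟫ := by
      by_cases hmu : mu = 0
      · simp [hqdef, hmu]
      · rw [hqdef, if_neg hmu]
        simp only [real_inner_smul_left, real_inner_smul_right]
        rw [hCC]
        have hne : mu * (lam - mu) ≠ 0 := mul_ne_zero hmu hlmne
        field_simp
    have hpq : ⟪p, q⟫ = 0 := by
      by_cases hmu : mu = 0
      · simp [hqdef, hmu]
      · rw [hpdef, hqdef, if_neg hmu]
        simp only [real_inner_smul_left, real_inner_smul_right]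
        have hz : ⟪B x, C x⟫ = 0 := by
          rw [inner_map_map B hsaB x (C x)]
          have : B (C x) = 0 := by
            rw [← ContinuousLinearMap.mul_apply, hBC, ContinuousLinearMap.zero_apply]
          rw [this, inner_zero_right]
        rw [hz]; ring
    have hqp : ⟪q, p⟫ = 0 := by rw [real_inner_comm]; exact hpq
    have hBCx : B x + C x = (lam - mu) • (f x) := by
      rw [← ContinuousLinearMap.add_apply, hBCf, ContinuousLinearMap.smul_apply]
    have hfx : f x = lam • p + mu • q := by
      by_cases hmu : mu = 0
      · have hCx : C x = 0 := by
          have h1 : ⟪C x, C x⟫ = 0 := by rw [hCC, hmu]; ring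
          exact inner_self_eq_zero.mp h1
        rw [hCx, add_zero] at hBCx
        rw [hqdef, if_pos hmu, smul_zero, add_zero, hpdef, smul_smul]
        rw [hmu] at hBCx ⊢
        rw [hBCx, smul_smul]
        have he : lam * (lam * (lam - 0))⁻¹ * (lam - 0) = 1 := by simp only [sub_zero]; field_simp
        rw [he, one_smul]
      · rw [hpdef, hqdef, if_neg hmu, smul_smul, smul_smul]
        have e1 : lam * (lam * (lam - mu))⁻¹ = (lam - mu)⁻¹ := by
          field_simp
        have e2 : mu * (mu * (lam - mu))⁻¹ = (lam - mu)⁻¹ := by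
          field_simp
        rw [e1, e2, ← smul_add, hBCx, smul_smul, inv_mul_cancel₀ hlmne, one_smul]
    -- now the estimate
    have hppnn : (0:ℝ) ≤ ⟪p, p⟫ := real_inner_self_nonneg
    have hqqnn : (0:ℝ) ≤ ⟪q, q⟫ := real_inner_self_nonneg
    have hsum : ⟪p, p⟫ + ⟪q, q⟫ ≤ ‖x‖^2 := by
      have h1 : ⟪p + q, p + q⟫ = ⟪p, p⟫ + ⟪q, q⟫ := by
        rw [inner_add_add_self, hpq, hqp]; ring
      have h2 : ⟪x, p + q⟫ = ⟪p, p⟫ + ⟪q, q⟫ := by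
        rw [inner_add_right, ← hpp, ← hqq]
      have h3' : ⟪x, p + q⟫ ≤ ‖x‖ * ‖p + q‖ := real_inner_le_norm x (p + q)
      have h4' : ‖p + q‖^2 = ⟪p, p⟫ + ⟪q, q⟫ := by rw [← real_inner_self_eq_norm_sq, h1]
      nlinarith [norm_nonneg (p + q), norm_nonneg x, sq_nonneg (‖p + q‖ - ‖x‖)]
    have hnf : ‖f x‖^2 ≤ lam^2 * ‖x‖^2 := by
      have h1 : ‖f x‖^2 = lam^2 * ⟪p, p⟫ + mu^2 * ⟪q, q⟫ := by
        rw [← real_inner_self_eq_norm_sq, hfx, inner_add_add_self]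
        simp only [real_inner_smul_left, real_inner_smul_right]
        rw [hpq, hqp]; ring
      have hmu2 : mu^2 ≤ lam^2 := by nlinarith
      nlinarith
    calc ‖f x‖ = Real.sqrt (‖f x‖^2) := by rw [Real.sqrt_sq (norm_nonneg _)]
    _ ≤ Real.sqrt (lam^2 * ‖x‖^2) := Real.sqrt_le_sqrt hnf
    _ = lam * ‖x‖ := by
        rw [show lam^2 * ‖x‖^2 = (lam * ‖x‖)^2 by ring, Real.sqrt_sq (by positivity)]
  -- lower bound
  obtain ⟨x, hx, hfxev⟩ := hev
  have hlb : lam ≤ ‖f‖ := by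
    have h1 : ‖f x‖ = lam * ‖x‖ := by
      rw [hfxev, norm_smul, Real.norm_eq_abs, abs_of_pos hlam]
    have h2 := f.le_opNorm x
    rw [h1] at h2
    have hxpos : 0 < ‖x‖ := norm_pos_iff.mpr hx
    exact le_of_mul_le_mul_right (by linarith) hxpos
  linarith


variable {n k : ℕ} (F : TwoUniformFrame n k)

lemma Qsymm : ∀ i j, F.Q j i = F.Q i j := by
  intro i j
  have := congrFun (congrFun F.symm i) j
  simpa [Matrix.transpose_apply] using this

lemma Qsq1 : ∀ i j, i ≠ j → F.Q i j * F.Q i j = 1 := by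
  intro i j h
  rcases F.offdiag i j h with h1 | h1 <;> rw [h1] <;> norm_num

lemma DQD_sq (a b c' : Fin n) (hab : a ≠ b) (hac : a ≠ c') (hbc : b ≠ c') :
    (diagS {a,b,c'} * F.Q * diagS {a,b,c'}) * (diagS {a,b,c'} * F.Q * diagS {a,b,c'})
      = (2:ℝ) • diagS {a,b,c'}
        + (F.Q a b * F.Q a c' * F.Q b c') • (diagS {a,b,c'} * F.Q * diagS {a,b,c'}) := by
  set S : Finset (Fin n) := {a,b,c'} with hS
  have hent : ∀ i j, (diagS S * F.Q * diagS S) i j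
      = (if i ∈ S then (1:ℝ) else 0) * F.Q i j * (if j ∈ S then 1 else 0) := by
    intro i j
    simp only [diagS]
    rw [Matrix.mul_diagonal, Matrix.diagonal_mul]
  have h2ab := Qsq1 F a b hab
  have h2ac := Qsq1 F a c' hac
  have h2bc := Qsq1 F b c' hbc
  have hba : F.Q b a = F.Q a b := Qsymm F a b
  have hca : F.Q c' a = F.Q a c' := Qsymm F a c'
  have hcb : F.Q c' b = F.Q b c' := Qsymm F b c'
  ext i j
  rw [Matrix.mul_apply]
  have hsum : ∀ l, (diagS S * F.Q * diagS S) i l * (diagS S * F.Q * diagS S) l j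
      = (if i ∈ S then (1:ℝ) else 0) * (if j ∈ S then 1 else 0) *
          (if l ∈ S then F.Q i l * F.Q l j else 0) := by
    intro l
    rw [hent, hent]
    by_cases hl : l ∈ S <;> simp [hl]
  rw [Finset.sum_congr rfl fun l _ => hsum l, ← Finset.mul_sum]
  have hsum2 : (∑ l, if l ∈ S then F.Q i l * F.Q l j else 0)
      = F.Q i a * F.Q a j + F.Q i b * F.Q b j + F.Q i c' * F.Q c' j := by
    rw [Finset.sum_ite_mem, Finset.univ_inter, hS]
    rw [Finset.sum_insert (by simp [hab, hac]), Finset.sum_insert (by simp [hbc]),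
      Finset.sum_singleton]
    ring
  rw [hsum2]
  have hrhs : ((2:ℝ) • diagS S
      + (F.Q a b * F.Q a c' * F.Q b c') • (diagS S * F.Q * diagS S)) i j
      = 2 * (if i = j then (if i ∈ S then (1:ℝ) else 0) else 0)
        + (F.Q a b * F.Q a c' * F.Q b c') *
          ((if i ∈ S then (1:ℝ) else 0) * F.Q i j * (if j ∈ S then 1 else 0)) := by
    simp [Matrix.add_apply, Matrix.smul_apply, hent, diagS, Matrix.diagonal_apply]
  rw [hrhs]
  have haS : a ∈ S := by simp [hS]
  have hbS : b ∈ S := by simp [hS]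
  have hcS : c' ∈ S := by simp [hS]
  by_cases hi : i ∈ S
  · by_cases hj : j ∈ S
    · have hi' : i = a ∨ i = b ∨ i = c' := by simpa [hS] using hi
      have hj' : j = a ∨ j = b ∨ j = c' := by simpa [hS] using hj
      rcases hi' with h | h | h <;> rcases hj' with h' | h' | h' <;> rw [h, h'] <;>
        simp only [haS, hbS, hcS, F.diag, hba, hca, hcb, hab, hac, hbc,
          Ne.symm hab, Ne.symm hac, Ne.symm hbc, eq_self_iff_true, if_true, if_false,
          ite_true, ite_false, mul_zero, zero_mul, add_zero, zero_add, mul_one, one_mul] <;>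
      first
        | linear_combination h2ab + h2ac
        | linear_combination h2ab + h2bc
        | linear_combination h2ac + h2bc
        | linear_combination (-(F.Q a c' * F.Q b c')) * h2ab
        | linear_combination (-(F.Q a b * F.Q b c')) * h2ac
        | linear_combination (-(F.Q a b * F.Q a c')) * h2bc
    · have hij : i ≠ j := fun h => hj (h ▸ hi)
      simp [hj, hij]
  · simp [hi, ite_self]

lemma diagS_mul_self (S : Finset (Fin n)) : diagS S * diagS S = diagS S := by
  ext i j
  rw [diagS, Matrix.diagonal_mul_diagonal]
  by_cases h : i ∈ S <;> simp [Matrix.diagonal_apply, h]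

lemma sandwich (S : Finset (Fin n)) :
    diagS S * (F.V * F.Vᵀ) * diagS S
      = ((k:ℝ)/n) • diagS S + c n k • (diagS S * F.Q * diagS S) := by
  rw [F.gram, Matrix.mul_add, Matrix.add_mul, Matrix.mul_smul, Matrix.mul_one,
    Matrix.mul_smul, Matrix.smul_mul, Matrix.smul_mul, diagS_mul_self]

lemma eigen_u (a b c' : Fin n) (hab : a ≠ b) (hac : a ≠ c') (hbc : b ≠ c')
    (wb wc lamQ : ℝ)
    (hwA : F.Q a b * wb + F.Q a c' * wc = lamQ)
    (hwB : F.Q a b + F.Q b c' * wc = lamQ * wb)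
    (hwC : F.Q a c' + F.Q b c' * wb = lamQ * wc)
    (hpos : 0 < (k:ℝ)/n + c n k * lamQ) :
    ∃ u : Fin k → ℝ, u ≠ 0 ∧
      (F.Vᵀ * diagS {a,b,c'} * F.V) *ᵥ u = ((k:ℝ)/n + c n k * lamQ) • u := by
  classical
  set S : Finset (Fin n) := {a,b,c'} with hS
  set w : Fin n → ℝ := Pi.single a 1 + (Pi.single b wb + Pi.single c' wc) with hw
  have haS : a ∈ S := by simp [hS]
  have hbS : b ∈ S := by simp [hS]
  have hcS : c' ∈ S := by simp [hS]
  have hwa : w a = 1 := by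
    simp [hw, Pi.single_apply, Ne.symm hab, Ne.symm hac]
  have hDw : diagS S *ᵥ w = w := by
    simp only [hw, diagS, Matrix.mulVec_add, Matrix.diagonal_mulVec_single]
    rw [if_pos haS, if_pos hbS, if_pos hcS, one_mul, one_mul, one_mul]
  have hQw : F.Q *ᵥ w = fun i => F.Q i a * 1 + (F.Q i b * wb + F.Q i c' * wc) := by
    simp only [hw, Matrix.mulVec_add, Matrix.mulVec_single]
    rfl
  have hDQw : diagS S *ᵥ (F.Q *ᵥ w) = lamQ • w := by
    funext i
    rw [hQw]
    simp only [diagS, Matrix.mulVec_diagonal, Pi.smul_apply, smul_eq_mul]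
    by_cases h1 : i = a
    · rw [h1, if_pos haS, hwa, F.diag]
      linear_combination hwA
    · by_cases h2 : i = b
      · have hwb : w b = wb := by
          simp [hw, Pi.single_apply, Ne.symm hab, hbc]
        rw [h2, if_pos hbS, hwb, F.diag, Qsymm F a b]
        linear_combination hwB
      · by_cases h3 : i = c'
        · have hwc : w c' = wc := by
            simp [hw, Pi.single_apply, Ne.symm hac, Ne.symm hbc]
          rw [h3, if_pos hcS, hwc, F.diag, Qsymm F a c', Qsymm F b c']
          linear_combination hwC
        · have hiS : i ∉ S := by simp [hS, h1, h2, h3]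
          rw [if_neg hiS]
          have hwi : w i = 0 := by
            simp [hw, Pi.single_apply, h1, h2, h3]
          simp [hwi]
  have hNw : (diagS S * (F.V * F.Vᵀ) * diagS S) *ᵥ w = ((k:ℝ)/n + c n k * lamQ) • w := by
    rw [sandwich F S]
    rw [Matrix.add_mulVec, Matrix.smul_mulVec, Matrix.smul_mulVec, hDw]
    have h5 : (diagS S * F.Q * diagS S) *ᵥ w = lamQ • w := by
      rw [← Matrix.mulVec_mulVec, ← Matrix.mulVec_mulVec, hDw, hDQw]
    rw [h5, smul_smul, add_smul]
  have e1 : (diagS S * (F.V * F.Vᵀ) * diagS S) *ᵥ w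
      = diagS S *ᵥ ((F.V * F.Vᵀ) *ᵥ w) := by
    conv_lhs => rw [show diagS S * (F.V * F.Vᵀ) * diagS S
      = diagS S * ((F.V * F.Vᵀ) * diagS S) from by rw [Matrix.mul_assoc]]
    rw [← Matrix.mulVec_mulVec, ← Matrix.mulVec_mulVec, hDw]
  have e2 : diagS S *ᵥ ((F.V * F.Vᵀ) *ᵥ w) = ((k:ℝ)/n + c n k * lamQ) • w := by
    rw [← e1, hNw]
  refine ⟨F.Vᵀ *ᵥ w, ?_, ?_⟩
  · intro h
    have hVu : F.V *ᵥ (F.Vᵀ *ᵥ w) = 0 := by rw [h, Matrix.mulVec_zero]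
    have hPw : (F.V * F.Vᵀ) *ᵥ w = 0 := by rw [← Matrix.mulVec_mulVec]; exact hVu
    have h0 : ((k:ℝ)/n + c n k * lamQ) • w = 0 := by
      rw [← e2, hPw, Matrix.mulVec_zero]
    have h1 := congrFun h0 a
    simp only [Pi.smul_apply, smul_eq_mul, Pi.zero_apply, hwa, mul_one] at h1
    linarith
  · have e3 : (F.Vᵀ * diagS S * F.V) *ᵥ (F.Vᵀ *ᵥ w)
        = F.Vᵀ *ᵥ (diagS S *ᵥ ((F.V * F.Vᵀ) *ᵥ w)) := by
      rw [Matrix.mulVec_mulVec, Matrix.mulVec_mulVec, Matrix.mulVec_mulVec]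
      simp only [Matrix.mul_assoc]
    rw [e3, e2, Matrix.mulVec_smul]

lemma triple_cubic (a b c' : Fin n) (hab : a ≠ b) (hac : a ≠ c') (hbc : b ≠ c')
    (eps : ℝ) (heps : F.Q a b * F.Q a c' * F.Q b c' = eps) :
    (F.Vᵀ * diagS {a,b,c'} * F.V) * ((F.Vᵀ * diagS {a,b,c'} * F.V) * (F.Vᵀ * diagS {a,b,c'} * F.V))
      = (2*((k:ℝ)/n) + eps * c n k) • ((F.Vᵀ * diagS {a,b,c'} * F.V) * (F.Vᵀ * diagS {a,b,c'} * F.V))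
        + (2*(c n k)^2 - ((k:ℝ)/n)^2 - eps*((k:ℝ)/n)*(c n k)) • (F.Vᵀ * diagS {a,b,c'} * F.V) := by
  have hG : (diagS {a,b,c'} * F.Q * diagS {a,b,c'}) * (diagS {a,b,c'} * F.Q * diagS {a,b,c'})
      = (2:ℝ) • diagS {a,b,c'} + eps • (diagS {a,b,c'} * F.Q * diagS {a,b,c'}) := by
    rw [← heps]; exact DQD_sq F a b c' hab hac hbc
  set D := diagS ({a,b,c'} : Finset (Fin n)) with hD
  set X := F.V * F.Vᵀ with hX
  set A := F.Vᵀ * D * F.V with hA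
  set G := D * F.Q * D with hGdef
  set R := F.Vᵀ * G * F.V with hRdef
  have hDD : D * D = D := diagS_mul_self _
  have hDG : D * G = G := by
    rw [hGdef, show D * (D * F.Q * D) = (D * D) * (F.Q * D) from by simp only [Matrix.mul_assoc],
      hDD, ← Matrix.mul_assoc]
  have hGD : G * D = G := by
    rw [hGdef, Matrix.mul_assoc, hDD]
  have hN : D * X * D = ((k:ℝ)/n) • D + c n k • G := sandwich F _
  have hNN : (D * X * D) * (D * X * D)
      = (((k:ℝ)/n)^2 + 2*(c n k)^2) • D + ((2*((k:ℝ)/n) + eps * c n k) * c n k) • G := by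
    rw [hN]
    simp only [Matrix.add_mul, Matrix.mul_add, Matrix.smul_mul, Matrix.mul_smul, smul_smul,
      hDD, hDG, hGD, hG]
    module
  have hA2 : A * A = F.Vᵀ * (D * X * D) * F.V := by
    rw [hA, hX]; simp only [Matrix.mul_assoc]
  have hmid : (D * X * D) * (D * X * D) = D * X * D * X * D := by
    rw [show (D * X * D) * (D * X * D) = D * X * ((D * D) * (X * D)) from by
      simp only [Matrix.mul_assoc], hDD]
    simp only [Matrix.mul_assoc]
  have hA3 : A * (A * A) = F.Vᵀ * ((D * X * D) * (D * X * D)) * F.V := by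
    rw [hmid, hA, hX]; simp only [Matrix.mul_assoc]
  have hR2 : A * A = ((k:ℝ)/n) • A + c n k • R := by
    rw [hA2, hN, Matrix.mul_add, Matrix.add_mul, Matrix.mul_smul, Matrix.mul_smul,
      Matrix.smul_mul, Matrix.smul_mul, ← hA, ← hRdef]
  have hR3 : A * (A * A) = (((k:ℝ)/n)^2 + 2*(c n k)^2) • A
      + ((2*((k:ℝ)/n) + eps * c n k) * c n k) • R := by
    rw [hA3, hNN, Matrix.mul_add, Matrix.add_mul, Matrix.mul_smul, Matrix.mul_smul,
      Matrix.smul_mul, Matrix.smul_mul, ← hA, ← hRdef]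
  rw [hR3, hR2]
  module

lemma opNorm_triple (hk : 1 ≤ k) (hkn : k < n) (a b c' : Fin n)
    (hab : a ≠ b) (hac : a ≠ c') (hbc : b ≠ c')
    (eps : ℝ) (heps : F.Q a b * F.Q a c' * F.Q b c' = eps) (heps1 : eps = 1 ∨ eps = -1) :
    opNorm (F.Vᵀ * diagS {a,b,c'} * F.V) = (k:ℝ)/n + (3 + eps)/2 * c n k := by
  have hcn := c_pos hk hkn
  have hcle := c_le hk hkn
  have hal : 0 < (k:ℝ)/n := by
    apply div_pos
    · exact_mod_cast Nat.lt_of_lt_of_le Nat.zero_lt_one hk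
    · have hn0 : 0 < n := by omega
      exact_mod_cast hn0
  have he2 : eps^2 = 1 := by rcases heps1 with h | h <;> rw [h] <;> norm_num
  have hcoef1 : (1:ℝ) ≤ (3+eps)/2 := by rcases heps1 with h | h <;> rw [h] <;> norm_num
  set A := F.Vᵀ * diagS {a,b,c'} * F.V with hAdef
  have hlam : 0 < (k:ℝ)/n + (3+eps)/2 * c n k := by
    nlinarith [mul_le_mul_of_nonneg_right hcoef1 hcn.le]
  have hmul : -((k:ℝ)/n + (3+eps)/2 * c n k) ≤ (k:ℝ)/n + (eps-3)/2 * c n k := by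
    rcases heps1 with h | h <;> rw [h] <;> norm_num <;> linarith
  have hlt : (k:ℝ)/n + (eps-3)/2 * c n k < (k:ℝ)/n + (3+eps)/2 * c n k := by
    have h1 : (eps-3)/2 < (3+eps)/2 := by linarith
    have := mul_lt_mul_of_pos_right h1 hcn
    linarith
  -- cubic at matrix level
  have hAc : A * (A * A)
      = (((k:ℝ)/n + (3+eps)/2 * c n k) + ((k:ℝ)/n + (eps-3)/2 * c n k)) • (A * A)
        - ((((k:ℝ)/n + (3+eps)/2 * c n k)) * (((k:ℝ)/n + (eps-3)/2 * c n k))) • A := by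
    rw [hAdef]
    rw [triple_cubic F a b c' hab hac hbc eps heps]
    have hs : 2*((k:ℝ)/n) + eps*(c n k)
        = ((k:ℝ)/n + (3+eps)/2 * c n k) + ((k:ℝ)/n + (eps-3)/2 * c n k) := by ring
    have hr : 2*(c n k)^2 - ((k:ℝ)/n)^2 - eps*((k:ℝ)/n)*(c n k)
        = -((((k:ℝ)/n + (3+eps)/2 * c n k)) * (((k:ℝ)/n + (eps-3)/2 * c n k))) := by
      linear_combination ((c n k)^2/4) * he2
    rw [hs, hr]
    module
  -- self adjointness
  have hAs : star A = A := by
    rw [Matrix.star_eq_conjTranspose, Matrix.conjTranspose_eq_transpose_of_trivial, hAdef]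
    rw [Matrix.transpose_mul, Matrix.transpose_mul, Matrix.transpose_transpose]
    rw [show (diagS {a,b,c'})ᵀ = diagS {a,b,c'} from Matrix.diagonal_transpose _]
    simp only [Matrix.mul_assoc]
  set f := Matrix.toEuclideanCLM (𝕜 := ℝ) A with hfdef
  have hsaf : _root_.IsSelfAdjoint f := by
    rw [_root_.IsSelfAdjoint, hfdef, ← map_star, hAs]
  have hf3 : f * (f * f)
      = (((k:ℝ)/n + (3+eps)/2 * c n k) + ((k:ℝ)/n + (eps-3)/2 * c n k)) • (f * f)
        - ((((k:ℝ)/n + (3+eps)/2 * c n k)) * (((k:ℝ)/n + (eps-3)/2 * c n k))) • f := by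
    rw [hfdef, ← _root_.map_mul, ← _root_.map_mul, hAc]
    simp only [_root_.map_sub, _root_.map_smul, _root_.map_mul]
  -- eigenvector
  have hev : ∃ u : Fin k → ℝ, u ≠ 0 ∧ A *ᵥ u = ((k:ℝ)/n + (3+eps)/2 * c n k) • u := by
    rcases heps1 with h | h
    · subst h
      have h2ab := Qsq1 F a b hab
      have h2ac := Qsq1 F a c' hac
      have hwA : F.Q a b * F.Q a b + F.Q a c' * F.Q a c' = 2 := by
        linear_combination h2ab + h2ac
      have hwB : F.Q a b + F.Q b c' * F.Q a c' = 2 * F.Q a b := by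
        linear_combination F.Q a b * heps - F.Q a c' * F.Q b c' * h2ab
      have hwC : F.Q a c' + F.Q b c' * F.Q a b = 2 * F.Q a c' := by
        linear_combination F.Q a c' * heps - F.Q a b * F.Q b c' * h2ac
      have hpos : 0 < (k:ℝ)/n + c n k * 2 := by nlinarith
      obtain ⟨u, hu0, huev⟩ := eigen_u F a b c' hab hac hbc (F.Q a b) (F.Q a c') 2
        hwA hwB hwC hpos
      refine ⟨u, hu0, ?_⟩
      rw [huev]
      rw [show (k:ℝ)/n + c n k * 2 = (k:ℝ)/n + (3+1)/2 * c n k from by ring]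
    · subst h
      have h2ab := Qsq1 F a b hab
      have h2ac := Qsq1 F a c' hac
      have hwA : F.Q a b * F.Q a b + F.Q a c' * 0 = 1 := by
        linear_combination h2ab
      have hwB : F.Q a b + F.Q b c' * 0 = 1 * F.Q a b := by ring
      have hwC : F.Q a c' + F.Q b c' * F.Q a b = 1 * 0 := by
        linear_combination F.Q a c' * heps - F.Q a b * F.Q b c' * h2ac
      have hpos : 0 < (k:ℝ)/n + c n k * 1 := by nlinarith
      obtain ⟨u, hu0, huev⟩ := eigen_u F a b c' hab hac hbc (F.Q a b) 0 1
        hwA hwB hwC hpos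
      refine ⟨u, hu0, ?_⟩
      rw [huev]
      rw [show (k:ℝ)/n + c n k * 1 = (k:ℝ)/n + (3 + -1)/2 * c n k from by ring]
  obtain ⟨u, hu0, huev⟩ := hev
  have hevE : ∃ x : EuclideanSpace ℝ (Fin k), x ≠ 0
      ∧ f x = ((k:ℝ)/n + (3+eps)/2 * c n k) • x := by
    refine ⟨(WithLp.equiv 2 _).symm u, ?_, ?_⟩
    · intro h
      apply hu0
      have := congrArg (WithLp.equiv 2 _) h
      simpa using this
    · rw [hfdef]
      show Matrix.toEuclideanCLM (𝕜 := ℝ) A (WithLp.toLp 2 u) = _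
      rw [Matrix.toEuclideanCLM_toLp, huev]
      rfl
  exact norm_eq_of_cubic f hsaf hlam hmul hlt hf3 hevE

lemma bipartite_iff (a b c' : Fin n) (hab : a ≠ b) (hac : a ≠ c') (hbc : b ≠ c') :
    IsCompleteBipartite ((frameGraph F).induce ((({a,b,c'} : Finset (Fin n)) : Set (Fin n))))
      ↔ F.Q a b * F.Q a c' * F.Q b c' = 1 := by
  set s : Set (Fin n) := ((({a,b,c'} : Finset (Fin n)) : Set (Fin n))) with hs
  have hadj : ∀ i j : s, ((frameGraph F).induce s).Adj i j
      ↔ ((i : Fin n) ≠ (j : Fin n) ∧ F.Q i j = -1) := fun i j => Iff.rfl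
  have haS : a ∈ s := by simp [hs]
  have hbS : b ∈ s := by simp [hs]
  have hcS : c' ∈ s := by simp [hs]
  have hmem : ∀ x : s, (x : Fin n) = a ∨ (x : Fin n) = b ∨ (x : Fin n) = c' := by
    intro x
    have := x.2
    simpa [hs] using this
  have hba : F.Q b a = F.Q a b := Qsymm F a b
  have hca : F.Q c' a = F.Q a c' := Qsymm F a c'
  have hcb : F.Q c' b = F.Q b c' := Qsymm F b c'
  constructor
  · rintro ⟨Aset, hA⟩
    have key : ∀ (x y : Fin n) (hxy : x ≠ y) (hx : x ∈ s) (hy : y ∈ s),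
        (F.Q x y = -1 ↔ ((⟨x,hx⟩ : s) ∈ Aset ↔ (⟨y,hy⟩ : s) ∉ Aset)) := by
      intro x y hxy hx hy
      rw [← hA ⟨x,hx⟩ ⟨y,hy⟩, hadj]
      simp [hxy]
    have hQab := key a b hab haS hbS
    have hQac := key a c' hac haS hcS
    have hQbc := key b c' hbc hbS hcS
    rcases F.offdiag a b hab with h1 | h1 <;>
      rcases F.offdiag a c' hac with h2 | h2 <;>
        rcases F.offdiag b c' hbc with h3 | h3 <;>
          rw [h1, h2, h3] <;>
          rw [h1] at hQab <;> rw [h2] at hQac <;> rw [h3] at hQbc <;>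
          norm_num at hQab hQac hQbc ⊢ <;>
          tauto
  · intro hprod
    rcases F.offdiag a b hab with h1 | h1 <;>
      rcases F.offdiag a c' hac with h2 | h2 <;>
        rcases F.offdiag b c' hbc with h3 | h3 <;>
          rw [h1, h2, h3] at hprod <;> norm_num at hprod
    -- remaining 4 cases: (1,1,1), (1,-1,-1), (-1,1,-1), (-1,-1,1)
    · refine ⟨∅, fun i j => ?_⟩
      rw [hadj]
      rcases hmem i with hi | hi | hi <;> rcases hmem j with hj | hj | hj <;>
        norm_num [Set.mem_empty_iff_false, hi, hj, h1, h2, h3, hba, hca, hcb,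
          hab, hac, hbc, Ne.symm hab, Ne.symm hac, Ne.symm hbc, F.diag]
    · refine ⟨{x | (x : Fin n) = c'}, fun i j => ?_⟩
      rw [hadj]
      rcases hmem i with hi | hi | hi <;> rcases hmem j with hj | hj | hj <;>
        norm_num [Set.mem_setOf_eq, hi, hj, h1, h2, h3, hba, hca, hcb,
          hab, hac, hbc, Ne.symm hab, Ne.symm hac, Ne.symm hbc, F.diag]
    · refine ⟨{x | (x : Fin n) = b}, fun i j => ?_⟩
      rw [hadj]
      rcases hmem i with hi | hi | hi <;> rcases hmem j with hj | hj | hj <;>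
        norm_num [Set.mem_setOf_eq, hi, hj, h1, h2, h3, hba, hca, hcb,
          hab, hac, hbc, Ne.symm hab, Ne.symm hac, Ne.symm hbc, F.diag]
    · refine ⟨{x | (x : Fin n) = a}, fun i j => ?_⟩
      rw [hadj]
      rcases hmem i with hi | hi | hi <;> rcases hmem j with hj | hj | hj <;>
        norm_num [Set.mem_setOf_eq, hi, hj, h1, h2, h3, hba, hca, hcb,
          hab, hac, hbc, Ne.symm hab, Ne.symm hac, Ne.symm hbc, F.diag]

lemma card_three (a b c' : Fin n) (hab : a ≠ b) (hac : a ≠ c') (hbc : b ≠ c') :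
    ({a,b,c'} : Finset (Fin n)).card = 3 := by
  rw [Finset.card_insert_of_notMem (by simp [hab, hac]),
    Finset.card_insert_of_notMem (by simp [hbc]), Finset.card_singleton]

lemma triple_filter (a b c' : Fin n) (hab : a ≠ b) (hac : a ≠ c') (hbc : b ≠ c') :
    (Finset.univ.filter fun p : Fin n × Fin n × Fin n =>
        ({p.1, p.2.1, p.2.2} : Finset (Fin n)) = {a,b,c'})
      = {(a,b,c'),(a,c',b),(b,a,c'),(b,c',a),(c',a,b),(c',b,a)} := by
  ext ⟨i,j,l⟩
  simp only [Finset.mem_filter, Finset.mem_univ, true_and, Finset.mem_insert,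
    Finset.mem_singleton, Prod.mk.injEq]
  constructor
  · intro h
    have hi : i = a ∨ i = b ∨ i = c' := by
      have : i ∈ ({a,b,c'} : Finset (Fin n)) := h ▸ (by simp)
      simpa using this
    have hj : j = a ∨ j = b ∨ j = c' := by
      have : j ∈ ({a,b,c'} : Finset (Fin n)) := h ▸ (by simp)
      simpa using this
    have hl : l = a ∨ l = b ∨ l = c' := by
      have : l ∈ ({a,b,c'} : Finset (Fin n)) := h ▸ (by simp)
      simpa using this
    have hcard : ({i,j,l} : Finset (Fin n)).card = 3 := by
      rw [h]; exact card_three a b c' hab hac hbc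
    have hij : i ≠ j := by
      rintro rfl
      rw [show ({i,i,l} : Finset (Fin n)) = {i,l} from by ext x; simp; try tauto] at hcard
      have h2 : ({i,l} : Finset (Fin n)).card ≤ 2 :=
        (Finset.card_insert_le _ _).trans (by simp)
      omega
    have hjl : j ≠ l := by
      rintro rfl
      rw [show ({i,j,j} : Finset (Fin n)) = {i,j} from by ext x; simp; try tauto] at hcard
      have h2 : ({i,j} : Finset (Fin n)).card ≤ 2 :=
        (Finset.card_insert_le _ _).trans (by simp)
      omega
    have hil : i ≠ l := by
      rintro rfl
      rw [show ({i,j,i} : Finset (Fin n)) = {i,j} from by ext x; simp; try tauto] at hcard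
      have h2 : ({i,j} : Finset (Fin n)).card ≤ 2 :=
        (Finset.card_insert_le _ _).trans (by simp)
      omega
    rcases hi with rfl | rfl | rfl <;> rcases hj with rfl | rfl | rfl <;>
      rcases hl with rfl | rfl | rfl <;> simp_all
  · intro h
    rcases h with ⟨rfl,rfl,rfl⟩ | ⟨rfl,rfl,rfl⟩ | ⟨rfl,rfl,rfl⟩ | ⟨rfl,rfl,rfl⟩ |
      ⟨rfl,rfl,rfl⟩ | ⟨rfl,rfl,rfl⟩ <;>
      (ext x; simp; try tauto)

lemma prod_pm (a b c' : Fin n) (hab : a ≠ b) (hac : a ≠ c') (hbc : b ≠ c') :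
    F.Q a b * F.Q a c' * F.Q b c' = 1 ∨ F.Q a b * F.Q a c' * F.Q b c' = -1 := by
  rcases F.offdiag a b hab with h1 | h1 <;> rcases F.offdiag a c' hac with h2 | h2 <;>
    rcases F.offdiag b c' hbc with h3 | h3 <;> rw [h1, h2, h3] <;> norm_num

lemma fiber_sum (S : Finset (Fin n)) (hS : S.card = 3) :
    (∑ p ∈ Finset.univ.filter
        (fun p : Fin n × Fin n × Fin n => ({p.1, p.2.1, p.2.2} : Finset (Fin n)) = S),
        F.Q p.1 p.2.1 * F.Q p.2.1 p.2.2 * F.Q p.2.2 p.1)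
      = 6 * (if IsCompleteBipartite ((frameGraph F).induce (S : Set (Fin n)))
          then (1:ℝ) else -1) := by
  obtain ⟨a, b, c', hab, hac, hbc, rfl⟩ := Finset.card_eq_three.mp hS
  rw [triple_filter a b c' hab hac hbc]
  have hne : ∀ (x y : Fin n), x ≠ y → ∀ (u v : Fin n), (x,u,v) ≠ (y, u, v) := by
    intro x y hxy u v h
    exact hxy (congrArg Prod.fst h)
  have hba : F.Q b a = F.Q a b := Qsymm F a b
  have hca : F.Q c' a = F.Q a c' := Qsymm F a c'
  have hcb : F.Q c' b = F.Q b c' := Qsymm F b c'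
  have hsum : (∑ p ∈ ({(a,b,c'),(a,c',b),(b,a,c'),(b,c',a),(c',a,b),(c',b,a)} :
      Finset (Fin n × Fin n × Fin n)),
        F.Q p.1 p.2.1 * F.Q p.2.1 p.2.2 * F.Q p.2.2 p.1)
      = 6 * (F.Q a b * F.Q a c' * F.Q b c') := by
    rw [Finset.sum_insert (by simp [Prod.ext_iff, hab, hac, hbc, Ne.symm hab, Ne.symm hac,
        Ne.symm hbc])]
    rw [Finset.sum_insert (by simp [Prod.ext_iff, hab, hac, hbc, Ne.symm hab, Ne.symm hac,
        Ne.symm hbc])]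
    rw [Finset.sum_insert (by simp [Prod.ext_iff, hab, hac, hbc, Ne.symm hab, Ne.symm hac,
        Ne.symm hbc])]
    rw [Finset.sum_insert (by simp [Prod.ext_iff, hab, hac, hbc, Ne.symm hab, Ne.symm hac,
        Ne.symm hbc])]
    rw [Finset.sum_insert (by simp [Prod.ext_iff, hab, hac, hbc, Ne.symm hab, Ne.symm hac,
        Ne.symm hbc])]
    rw [Finset.sum_singleton]
    simp only [hba, hca, hcb]
    ring
  rw [hsum]
  by_cases hbip : IsCompleteBipartite
      ((frameGraph F).induce ((({a,b,c'} : Finset (Fin n)) : Set (Fin n))))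
  · rw [if_pos hbip, (bipartite_iff F a b c' hab hac hbc).mp hbip]
  · rw [if_neg hbip]
    rcases prod_pm F a b c' hab hac hbc with h | h
    · exact absurd ((bipartite_iff F a b c' hab hac hbc).mpr h) hbip
    · rw [h]

lemma Tval (hk : 1 ≤ k) (hkn : k < n) :
    (c n k) * (c n k) *
      (∑ p : Fin n × Fin n × Fin n, F.Q p.1 p.2.1 * F.Q p.2.1 p.2.2 * F.Q p.2.2 p.1)
      = (c n k) * (1 - 2*((k:ℝ)/n)) * (n*(n-1)) := by
  have hP : (F.V*F.Vᵀ)*(F.V*F.Vᵀ) = F.V*F.Vᵀ := by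
    rw [show (F.V*F.Vᵀ)*(F.V*F.Vᵀ) = F.V*(F.Vᵀ*F.V)*F.Vᵀ from by simp only [Matrix.mul_assoc],
      F.parseval, Matrix.mul_one]
  have h0 : (((k:ℝ)/n) • (1 : Matrix (Fin n) (Fin n) ℝ) + c n k • F.Q)
      * (((k:ℝ)/n) • (1 : Matrix (Fin n) (Fin n) ℝ) + c n k • F.Q)
      = ((k:ℝ)/n) • (1 : Matrix (Fin n) (Fin n) ℝ) + c n k • F.Q := by
    rw [← F.gram]; exact hP
  have hQQ : (c n k * c n k) • (F.Q*F.Q)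
      = ((k:ℝ)/n - ((k:ℝ)/n)*((k:ℝ)/n)) • (1 : Matrix (Fin n) (Fin n) ℝ)
        + (c n k - 2*(((k:ℝ)/n) * c n k)) • F.Q := by
    simp only [Matrix.add_mul, Matrix.mul_add, Matrix.smul_mul, Matrix.mul_smul, smul_smul,
      Matrix.mul_one, Matrix.one_mul] at h0
    linear_combination (norm := module) h0
  have hQQent : ∀ i l, (c n k * c n k) * ((F.Q*F.Q) i l)
      = ((k:ℝ)/n - ((k:ℝ)/n)*((k:ℝ)/n)) * ((1 : Matrix (Fin n) (Fin n) ℝ) i l)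
        + (c n k - 2*(((k:ℝ)/n) * c n k)) * (F.Q i l) := by
    intro i l
    have := congrFun (congrFun hQQ i) l
    simpa [Matrix.smul_apply, Matrix.add_apply, smul_eq_mul] using this
  -- regroup the big sum
  have hT : (∑ p : Fin n × Fin n × Fin n, F.Q p.1 p.2.1 * F.Q p.2.1 p.2.2 * F.Q p.2.2 p.1)
      = ∑ i : Fin n, ∑ l : Fin n, (F.Q*F.Q) i l * F.Q l i := by
    rw [Fintype.sum_prod_type]
    congr 1
    funext i
    rw [Fintype.sum_prod_type]
    rw [Finset.sum_comm]
    congr 1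
    funext l
    rw [Matrix.mul_apply, Finset.sum_mul]
  have hdiag : ∀ i : Fin n, (∑ l : Fin n, ((1 : Matrix (Fin n) (Fin n) ℝ) i l) * F.Q l i) = 0 := by
    intro i
    have : ∀ l, ((1 : Matrix (Fin n) (Fin n) ℝ) i l) * F.Q l i
        = if i = l then F.Q l i else 0 := by
      intro l
      by_cases h : i = l <;> simp [Matrix.one_apply, h]
    rw [Finset.sum_congr rfl fun l _ => this l, Finset.sum_ite_eq Finset.univ i
      (fun l => F.Q l i)]
    simp [F.diag]
  have hsq : ∀ i : Fin n, (∑ l : Fin n, F.Q i l * F.Q l i) = (n:ℝ) - 1 := by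
    intro i
    have h1 : ∀ l, F.Q i l * F.Q l i = 1 - (if l = i then 1 else 0) := by
      intro l
      by_cases h : l = i
      · simp [h, F.diag]
      · rw [Qsymm F i l]
        rw [Qsq1 F i l (fun hh => h (hh ▸ rfl))]
        simp [h]
    rw [Finset.sum_congr rfl fun l _ => h1 l, Finset.sum_sub_distrib, Finset.sum_const,
      Finset.sum_ite_eq' Finset.univ i (fun _ => (1:ℝ))]
    simp [Finset.card_univ]
  have hmain : (c n k * c n k) *
      (∑ p : Fin n × Fin n × Fin n, F.Q p.1 p.2.1 * F.Q p.2.1 p.2.2 * F.Q p.2.2 p.1)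
      = (c n k - 2*(((k:ℝ)/n) * c n k)) * ((n:ℝ)*((n:ℝ)-1)) := by
    rw [hT, Finset.mul_sum]
    have : ∀ i : Fin n, (c n k * c n k) * (∑ l : Fin n, (F.Q*F.Q) i l * F.Q l i)
        = (c n k - 2*(((k:ℝ)/n) * c n k)) * ((n:ℝ)-1) := by
      intro i
      rw [Finset.mul_sum]
      have h2 : ∀ l, (c n k * c n k) * ((F.Q*F.Q) i l * F.Q l i)
          = ((k:ℝ)/n - ((k:ℝ)/n)*((k:ℝ)/n)) * (((1 : Matrix (Fin n) (Fin n) ℝ) i l) * F.Q l i)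
            + (c n k - 2*(((k:ℝ)/n) * c n k)) * (F.Q i l * F.Q l i) := by
        intro l
        have := hQQent i l
        linear_combination (F.Q l i) * this
      rw [Finset.sum_congr rfl fun l _ => h2 l, Finset.sum_add_distrib, ← Finset.mul_sum,
        ← Finset.mul_sum, hdiag i, hsq i]
      ring
    rw [Finset.sum_congr rfl fun i _ => this i, Finset.sum_const, Finset.card_univ]
    simp [nsmul_eq_mul]
    ring
  rw [hmain]
  ring

lemma count_relation (hk : 1 ≤ k) (hkn : k < n) :
    c n k * c n k *
      (6 * (2 * ((Finset.univ.filter fun S : Finset (Fin n) => S.card = 3 ∧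
          IsCompleteBipartite ((frameGraph F).induce (S : Set (Fin n)))).card : ℝ)
        - ((Finset.univ.filter fun S : Finset (Fin n) => S.card = 3).card : ℝ)))
      = c n k * (1 - 2*((k:ℝ)/n)) * (n*(n-1)) := by
  classical
  have hfib := Finset.sum_fiberwise_of_maps_to (s := (Finset.univ : Finset (Fin n × Fin n × Fin n)))
    (t := (Finset.univ : Finset (Finset (Fin n))))
    (g := fun p : Fin n × Fin n × Fin n => ({p.1, p.2.1, p.2.2} : Finset (Fin n)))
    (fun x _ => Finset.mem_univ _)
    (fun p => F.Q p.1 p.2.1 * F.Q p.2.1 p.2.2 * F.Q p.2.2 p.1)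
  have hsub : ∑ S ∈ (Finset.univ.filter fun S : Finset (Fin n) => S.card = 3),
      (∑ p ∈ Finset.univ.filter
        (fun p : Fin n × Fin n × Fin n => ({p.1, p.2.1, p.2.2} : Finset (Fin n)) = S),
        F.Q p.1 p.2.1 * F.Q p.2.1 p.2.2 * F.Q p.2.2 p.1)
      = ∑ S ∈ (Finset.univ : Finset (Finset (Fin n))),
      (∑ p ∈ Finset.univ.filter
        (fun p : Fin n × Fin n × Fin n => ({p.1, p.2.1, p.2.2} : Finset (Fin n)) = S),
        F.Q p.1 p.2.1 * F.Q p.2.1 p.2.2 * F.Q p.2.2 p.1) := by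
    apply Finset.sum_subset (Finset.subset_univ _)
    intro S _ hS
    simp only [Finset.mem_filter, Finset.mem_univ, true_and] at hS
    apply Finset.sum_eq_zero
    intro p hp
    simp only [Finset.mem_filter, Finset.mem_univ, true_and] at hp
    by_cases e1 : p.1 = p.2.1
    · rw [e1, F.diag, zero_mul, zero_mul]
    · by_cases e2 : p.2.1 = p.2.2
      · rw [e2, F.diag, mul_zero, zero_mul]
      · by_cases e3 : p.2.2 = p.1
        · rw [e3, F.diag, mul_zero]
        · exfalso
          apply hS
          rw [← hp]
          exact card_three p.1 p.2.1 p.2.2 e1 (fun h => e3 (h.symm)) e2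
  have hfsum : ∀ S ∈ (Finset.univ.filter fun S : Finset (Fin n) => S.card = 3),
      (∑ p ∈ Finset.univ.filter
        (fun p : Fin n × Fin n × Fin n => ({p.1, p.2.1, p.2.2} : Finset (Fin n)) = S),
        F.Q p.1 p.2.1 * F.Q p.2.1 p.2.2 * F.Q p.2.2 p.1)
      = 6 * (if IsCompleteBipartite ((frameGraph F).induce (S : Set (Fin n)))
          then (1:ℝ) else -1) := by
    intro S hS
    simp only [Finset.mem_filter, Finset.mem_univ, true_and] at hS
    exact fiber_sum F S hS
  have hT2 : (∑ p : Fin n × Fin n × Fin n, F.Q p.1 p.2.1 * F.Q p.2.1 p.2.2 * F.Q p.2.2 p.1)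
      = 6 * (2 * ((Finset.univ.filter fun S : Finset (Fin n) => S.card = 3 ∧
          IsCompleteBipartite ((frameGraph F).induce (S : Set (Fin n)))).card : ℝ)
        - ((Finset.univ.filter fun S : Finset (Fin n) => S.card = 3).card : ℝ)) := by
    rw [← hfib, ← hsub, Finset.sum_congr rfl hfsum, ← Finset.mul_sum]
    have hstep : ∀ S : Finset (Fin n),
        (if IsCompleteBipartite ((frameGraph F).induce (S : Set (Fin n)))
          then (1:ℝ) else -1)
        = 2*(if IsCompleteBipartite ((frameGraph F).induce (S : Set (Fin n)))
          then (1:ℝ) else 0) - 1 := by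
      intro S
      by_cases h : IsCompleteBipartite ((frameGraph F).induce (S : Set (Fin n))) <;>
        simp [h] <;> norm_num
    rw [Finset.sum_congr rfl (fun S _ => hstep S), Finset.sum_sub_distrib, ← Finset.mul_sum,
      Finset.sum_boole, Finset.sum_const, Finset.filter_filter]
    simp only [nsmul_eq_mul, mul_one, smul_eq_mul]
  rw [← hT2]
  exact Tval F hk hkn

lemma card_S3 : (Finset.univ.filter fun S : Finset (Fin n) => S.card = 3).card = n.choose 3 := by
  rw [← Finset.powerset_univ, ← Finset.powersetCard_eq_filter, Finset.card_powersetCard,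
    Finset.card_univ, Fintype.card_fin]

lemma opNorm_S (hk : 1 ≤ k) (hkn : k < n) (S : Finset (Fin n)) (hS : S.card = 3) :
    opNorm (F.Vᵀ * diagS S * F.V)
      = if IsCompleteBipartite ((frameGraph F).induce (S : Set (Fin n)))
          then (k:ℝ)/n + 2 * c n k else (k:ℝ)/n + c n k := by
  obtain ⟨a, b, c', hab, hac, hbc, rfl⟩ := Finset.card_eq_three.mp hS
  rcases prod_pm F a b c' hab hac hbc with h | h
  · rw [if_pos ((bipartite_iff F a b c' hab hac hbc).mpr h)]
    rw [opNorm_triple F hk hkn a b c' hab hac hbc 1 h (Or.inl rfl)]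
    norm_num
  · have hnb : ¬ IsCompleteBipartite
        ((frameGraph F).induce ((({a,b,c'} : Finset (Fin n)) : Set (Fin n)))) := by
      intro hb
      have := (bipartite_iff F a b c' hab hac hbc).mp hb
      rw [h] at this
      norm_num at this
    rw [if_neg hnb]
    rw [opNorm_triple F hk hkn a b c' hab hac hbc (-1) h (Or.inr rfl)]
    norm_num

lemma errP_eq (hk : 1 ≤ k) (hkn : k < n) (p : ℝ) :
    errP F.V 3 p = ((n.choose 3 : ℝ)⁻¹ *
      ((((k:ℝ)/n + 2 * c n k) ^ p)
          * ((Finset.univ.filter fun S : Finset (Fin n) => S.card = 3 ∧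
              IsCompleteBipartite ((frameGraph F).induce (S : Set (Fin n)))).card : ℝ)
        + (((k:ℝ)/n + c n k) ^ p)
          * ((n.choose 3 : ℝ) -
            ((Finset.univ.filter fun S : Finset (Fin n) => S.card = 3 ∧
              IsCompleteBipartite ((frameGraph F).induce (S : Set (Fin n)))).card : ℝ)))) ^ (1/p) := by
  rw [errP]
  congr 2
  have hsum : ∑ S ∈ Finset.univ.filter (fun S : Finset (Fin n) => S.card = 3),
      opNorm (F.Vᵀ * diagS S * F.V) ^ p
      = ∑ S ∈ Finset.univ.filter (fun S : Finset (Fin n) => S.card = 3),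
        (if IsCompleteBipartite ((frameGraph F).induce (S : Set (Fin n)))
          then (((k:ℝ)/n + 2 * c n k) ^ p) else (((k:ℝ)/n + c n k) ^ p)) := by
    apply Finset.sum_congr rfl
    intro S hS
    simp only [Finset.mem_filter, Finset.mem_univ, true_and] at hS
    rw [opNorm_S F hk hkn S hS, apply_ite (fun x : ℝ => x ^ p)]
  rw [hsum]
  have hstep : ∀ S : Finset (Fin n),
      (if IsCompleteBipartite ((frameGraph F).induce (S : Set (Fin n)))
        then (((k:ℝ)/n + 2 * c n k) ^ p) else (((k:ℝ)/n + c n k) ^ p))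
      = (((k:ℝ)/n + 2 * c n k) ^ p - ((k:ℝ)/n + c n k) ^ p) *
          (if IsCompleteBipartite ((frameGraph F).induce (S : Set (Fin n)))
            then (1:ℝ) else 0) + (((k:ℝ)/n + c n k) ^ p) := by
    intro S
    by_cases h : IsCompleteBipartite ((frameGraph F).induce (S : Set (Fin n))) <;>
      simp [h]
  rw [Finset.sum_congr rfl (fun S _ => hstep S), Finset.sum_add_distrib, ← Finset.mul_sum,
    Finset.sum_boole, Finset.sum_const, Finset.filter_filter, card_S3]
  simp only [nsmul_eq_mul, smul_eq_mul, mul_one]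
  ring

theorem statement17' (hk : 1 ≤ k) (hkn : k < n)
    (F1 F2 : TwoUniformFrame n k) :
    ∃ E3 : ℕ,
      (Finset.univ.filter fun S : Finset (Fin n) =>
          S.card = 3 ∧
            IsCompleteBipartite ((frameGraph F1).induce (S : Set (Fin n)))).card = E3 ∧
      (Finset.univ.filter fun S : Finset (Fin n) =>
          S.card = 3 ∧
            IsCompleteBipartite ((frameGraph F2).induce (S : Set (Fin n)))).card = E3 ∧
      ∀ p : ℝ, 2 ≤ p →
        errP F1.V 3 p = errP F2.V 3 p ∧
        errP F1.V 3 p = ((n.choose 3 : ℝ)⁻¹ *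
            (((k : ℝ) / n + 2 * c n k) ^ p * E3 +
              ((k : ℝ) / n + c n k) ^ p * ((n.choose 3 : ℝ) - E3))) ^ (1 / p) := by
  have h1 := count_relation F1 hk hkn
  have h2 := count_relation F2 hk hkn
  have hcpos := c_pos hk hkn
  have hcard : (Finset.univ.filter fun S : Finset (Fin n) =>
      S.card = 3 ∧ IsCompleteBipartite ((frameGraph F2).induce (S : Set (Fin n)))).card
      = (Finset.univ.filter fun S : Finset (Fin n) =>
      S.card = 3 ∧ IsCompleteBipartite ((frameGraph F1).induce (S : Set (Fin n)))).card := by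
    have h3 := h1.trans h2.symm
    have hc2 : (0:ℝ) < c n k * c n k := mul_pos hcpos hcpos
    have h4 := mul_left_cancel₀ hc2.ne' h3
    have : ((Finset.univ.filter fun S : Finset (Fin n) =>
        S.card = 3 ∧ IsCompleteBipartite ((frameGraph F2).induce (S : Set (Fin n)))).card : ℝ)
        = ((Finset.univ.filter fun S : Finset (Fin n) =>
        S.card = 3 ∧ IsCompleteBipartite ((frameGraph F1).induce (S : Set (Fin n)))).card : ℝ) := by
      linarith
    exact_mod_cast this
  refine ⟨(Finset.univ.filter fun S : Finset (Fin n) =>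
      S.card = 3 ∧ IsCompleteBipartite ((frameGraph F1).induce (S : Set (Fin n)))).card,
    rfl, hcard, ?_⟩
  intro p hp
  constructor
  · rw [errP_eq F1 hk hkn p, errP_eq F2 hk hkn p, hcard]
  · rw [errP_eq F1 hk hkn p]

theorem statement17 (n k : ℕ) (hk : 1 ≤ k) (hkn : k < n)
    (F1 F2 : TwoUniformFrame n k) :
    ∃ E3 : ℕ,
      (Finset.univ.filter fun S : Finset (Fin n) =>
          S.card = 3 ∧
            IsCompleteBipartite ((frameGraph F1).induce (S : Set (Fin n)))).card = E3 ∧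
      (Finset.univ.filter fun S : Finset (Fin n) =>
          S.card = 3 ∧
            IsCompleteBipartite ((frameGraph F2).induce (S : Set (Fin n)))).card = E3 ∧
      ∀ p : ℝ, 2 ≤ p →
        errP F1.V 3 p = errP F2.V 3 p ∧
        errP F1.V 3 p = ((n.choose 3 : ℝ)⁻¹ *
            (((k : ℝ) / n + 2 * c n k) ^ p * E3 +
              ((k : ℝ) / n + c n k) ^ p * ((n.choose 3 : ℝ) - E3))) ^ (1 / p) := by
  exact statement17' hk hkn F1 F2

end FramesErasures
end
end

section
/- Let H be an n×n graph Hadamard matrix with n ≥ 48, and let F be the real 2-uniform (n,k)-frame with signature matrix Q = H − I (so k = (n + √n)/2). Then the graph G_F contains an induced complete bipartite subgraph on 5 vertices, and consequently e_m^∞(F) = k/n + (m−1)·c_{n,k} for all m ≤ 5. -/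
open Matrix
open scoped Classical

noncomputable section

namespace FramesErasures

/-! ### Auxiliary lemmas -/

/-- triple sum expansion of `∑ ((Vᵀ u) t)^2`. -/
private lemma sum_sq_vecMul {n k : ℕ} (V : Matrix (Fin n) (Fin k) ℝ) (u : Fin n → ℝ) :
    ∑ t, ((Vᵀ *ᵥ u) t) ^ 2 = ∑ i, ∑ j, u i * u j * (V * Vᵀ) i j := by
  have lhs : ∀ t, ((Vᵀ *ᵥ u) t) ^ 2 = ∑ i, ∑ j, (V i t * u i) * (V j t * u j) := by
    intro t
    rw [pow_two]
    simp only [Matrix.mulVec, dotProduct, Matrix.transpose_apply]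
    rw [Finset.sum_mul_sum]
  rw [Finset.sum_congr rfl fun t _ => lhs t]
  rw [Finset.sum_comm]
  refine Finset.sum_congr rfl fun i _ => ?_
  rw [Finset.sum_comm]
  refine Finset.sum_congr rfl fun j _ => ?_
  rw [Matrix.mul_apply, Finset.mul_sum]
  refine Finset.sum_congr rfl fun t _ => ?_
  simp only [Matrix.transpose_apply]
  ring

/-- if the columns of `M` are orthogonal with square norm `r`, then `∑ (Mu)_i^2 = r ∑ u^2`. -/
private lemma sum_sq_rows {n : ℕ} (M : Fin n → Fin n → ℝ) (r : ℝ)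
    (horth : ∀ i j, ∑ v, M v i * M v j = if i = j then r else 0)
    (u : Fin n → ℝ) :
    ∑ i, (∑ j, M i j * u j) ^ 2 = r * ∑ j, (u j) ^ 2 := by
  have lhs : ∀ i, (∑ j, M i j * u j) ^ 2 = ∑ j, ∑ l, (M i j * u j) * (M i l * u l) := by
    intro i; rw [pow_two, Finset.sum_mul_sum]
  rw [Finset.sum_congr rfl fun i _ => lhs i]
  rw [Finset.sum_comm]
  have inner : ∀ j, ∑ i, ∑ l, (M i j * u j) * (M i l * u l) = u j ^ 2 * r := by
    intro j
    rw [Finset.sum_comm]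
    have : ∀ l, ∑ i, (M i j * u j) * (M i l * u l) = u j * u l * (if j = l then r else 0) := by
      intro l
      rw [← horth j l, Finset.mul_sum]
      exact Finset.sum_congr rfl fun i _ => by ring
    rw [Finset.sum_congr rfl fun l _ => this l]
    simp only [mul_ite, mul_zero]
    rw [Finset.sum_ite_eq]
    simp [pow_two]
  rw [Finset.sum_congr rfl fun j _ => inner j, ← Finset.sum_mul]
  ring

/-- quadratic form bound for the Grammian on vectors supported in `S`. -/
private lemma quadform_le {n : ℕ} (Q : Matrix (Fin n) (Fin n) ℝ)
    (hdiag : ∀ i, Q i i = 0) (hoff : ∀ i j, i ≠ j → Q i j = 1 ∨ Q i j = -1)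
    (a cc : ℝ) (hc : 0 ≤ cc)
    (S : Finset (Fin n)) (u : Fin n → ℝ) (hu : ∀ i, i ∉ S → u i = 0) :
    ∑ i, ∑ j, u i * u j * (a • (1 : Matrix (Fin n) (Fin n) ℝ) + cc • Q) i j ≤
      (a + ((S.card : ℝ) - 1) * cc) * ∑ i, (u i) ^ 2 := by
  have husq : ∑ i, (u i) ^ 2 = ∑ i ∈ S, (u i) ^ 2 := by
    refine (Finset.sum_subset (Finset.subset_univ S) ?_).symm
    intro i _ hi; rw [hu i hi]; ring
  have hrestrict : ∑ i, ∑ j, u i * u j * (a • (1 : Matrix (Fin n) (Fin n) ℝ) + cc • Q) i j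
      = ∑ i ∈ S, ∑ j ∈ S, u i * u j * (a • (1 : Matrix (Fin n) (Fin n) ℝ) + cc • Q) i j := by
    refine ((Finset.sum_subset (Finset.subset_univ S) ?_).symm).trans ?_
    · intro i _ hi
      refine Finset.sum_eq_zero fun j _ => ?_
      rw [hu i hi]; ring
    · refine Finset.sum_congr rfl fun i _ => ?_
      refine (Finset.sum_subset (Finset.subset_univ S) ?_).symm
      intro j _ hj; rw [hu j hj]; ring
  rw [hrestrict]
  have hentry : ∀ i j, (a • (1 : Matrix (Fin n) (Fin n) ℝ) + cc • Q) i j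
      = a * (if i = j then 1 else 0) + cc * Q i j := by
    intro i j
    simp [Matrix.add_apply, Matrix.smul_apply, Matrix.one_apply, smul_eq_mul, apply_ite]
  have hsplit : ∑ i ∈ S, ∑ j ∈ S, u i * u j * (a • (1 : Matrix (Fin n) (Fin n) ℝ) + cc • Q) i j
      = a * (∑ i ∈ S, (u i) ^ 2) + cc * ∑ i ∈ S, ∑ j ∈ S, u i * u j * Q i j := by
    have : ∀ i ∈ S, ∑ j ∈ S, u i * u j * (a • (1 : Matrix (Fin n) (Fin n) ℝ) + cc • Q) i j
        = a * (u i) ^ 2 + cc * ∑ j ∈ S, u i * u j * Q i j := by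
      intro i hi
      have : ∀ j ∈ S, u i * u j * (a • (1 : Matrix (Fin n) (Fin n) ℝ) + cc • Q) i j
          = (if i = j then a * u i * u j else 0) + cc * (u i * u j * Q i j) := by
        intro j _
        rw [hentry]
        by_cases h : i = j <;> simp [h] <;> ring
      rw [Finset.sum_congr rfl this, Finset.sum_add_distrib, ← Finset.mul_sum]
      congr 1
      · rw [Finset.sum_ite_eq S i (fun j => a * u i * u j), if_pos hi, pow_two]
        ring
    rw [Finset.sum_congr rfl this, Finset.sum_add_distrib, ← Finset.mul_sum, ← Finset.mul_sum]
  rw [hsplit, husq]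
  have hQbound : ∑ i ∈ S, ∑ j ∈ S, u i * u j * Q i j ≤
      ((S.card : ℝ) - 1) * ∑ i ∈ S, (u i) ^ 2 := by
    have step1 : ∑ i ∈ S, ∑ j ∈ S, u i * u j * Q i j ≤
        ∑ i ∈ S, ∑ j ∈ S, (if i = j then 0 else |u i| * |u j|) := by
      refine Finset.sum_le_sum fun i _ => Finset.sum_le_sum fun j _ => ?_
      by_cases h : i = j
      · subst h; rw [hdiag, if_pos rfl]; ring_nf; exact le_refl 0
      · rw [if_neg h]
        rcases hoff i j h with hq | hq <;> rw [hq]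
        · calc u i * u j * 1 = u i * u j := by ring
            _ ≤ |u i * u j| := le_abs_self _
            _ = |u i| * |u j| := abs_mul _ _
        · calc u i * u j * (-1) = -(u i * u j) := by ring
            _ ≤ |u i * u j| := neg_le_abs _
            _ = |u i| * |u j| := abs_mul _ _
    have step2 : ∑ i ∈ S, ∑ j ∈ S, (if i = j then 0 else |u i| * |u j|)
        = (∑ i ∈ S, |u i|) ^ 2 - ∑ i ∈ S, (u i) ^ 2 := by
      have inner : ∀ i ∈ S, ∑ j ∈ S, (if i = j then 0 else |u i| * |u j|)
          = |u i| * (∑ j ∈ S, |u j|) - (u i) ^ 2 := by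
        intro i hi
        have : ∀ j ∈ S, (if i = j then 0 else |u i| * |u j|)
            = |u i| * |u j| - (if i = j then |u i| * |u j| else 0) := by
          intro j _; by_cases h : i = j <;> simp [h]
        rw [Finset.sum_congr rfl this, Finset.sum_sub_distrib, Finset.sum_ite_eq S i
          (fun j => |u i| * |u j|), if_pos hi, ← Finset.mul_sum, abs_mul_abs_self, ← pow_two]
      rw [Finset.sum_congr rfl inner, Finset.sum_sub_distrib, ← Finset.sum_mul, ← pow_two]
    have step3 : (∑ i ∈ S, |u i|) ^ 2 ≤ (S.card : ℝ) * ∑ i ∈ S, (u i) ^ 2 := by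
      have := sq_sum_le_card_mul_sum_sq (s := S) (f := fun i => |u i|)
      simpa [sq_abs] using this
    calc ∑ i ∈ S, ∑ j ∈ S, u i * u j * Q i j
        ≤ (∑ i ∈ S, |u i|) ^ 2 - ∑ i ∈ S, (u i) ^ 2 := step1.trans (le_of_eq step2)
      _ ≤ (S.card : ℝ) * ∑ i ∈ S, (u i) ^ 2 - ∑ i ∈ S, (u i) ^ 2 := by
          have : 0 ≤ ∑ i ∈ S, (u i) ^ 2 := Finset.sum_nonneg fun i _ => sq_nonneg _
          linarith
      _ = ((S.card : ℝ) - 1) * ∑ i ∈ S, (u i) ^ 2 := by ring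
  calc a * (∑ i ∈ S, (u i) ^ 2) + cc * ∑ i ∈ S, ∑ j ∈ S, u i * u j * Q i j
      ≤ a * (∑ i ∈ S, (u i) ^ 2) + cc * (((S.card : ℝ) - 1) * ∑ i ∈ S, (u i) ^ 2) := by
        have := mul_le_mul_of_nonneg_left hQbound hc
        linarith
    _ = (a + ((S.card : ℝ) - 1) * cc) * ∑ i ∈ S, (u i) ^ 2 := by ring

private lemma euclidean_norm_symm {k : ℕ} (w : Fin k → ℝ) :
    ‖(WithLp.equiv 2 (Fin k → ℝ)).symm w‖ = Real.sqrt (∑ t, (w t) ^ 2) := by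
  rw [EuclideanSpace.norm_eq]
  congr 1
  refine Finset.sum_congr rfl fun t _ => ?_
  rw [Real.norm_eq_abs, sq_abs]
  rfl

private lemma toEuclideanCLM_apply_symm {k : ℕ} (A : Matrix (Fin k) (Fin k) ℝ) (w : Fin k → ℝ) :
    Matrix.toEuclideanCLM (𝕜 := ℝ) A ((WithLp.equiv 2 (Fin k → ℝ)).symm w)
      = (WithLp.equiv 2 (Fin k → ℝ)).symm (A *ᵥ w) := by
  rfl

/-- Upper bound on the operator norm of an error operator. -/
private lemma opNorm_err_le {n k : ℕ} (V : Matrix (Fin n) (Fin k) ℝ)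
    (Q : Matrix (Fin n) (Fin n) ℝ)
    (hdiag : ∀ i, Q i i = 0) (hoff : ∀ i j, i ≠ j → Q i j = 1 ∨ Q i j = -1)
    (hgram : V * Vᵀ = ((k : ℝ) / n) • (1 : Matrix (Fin n) (Fin n) ℝ) + c n k • Q)
    (S : Finset (Fin n)) (hm : 1 ≤ S.card) :
    opNorm (Vᵀ * diagS S * V) ≤ (k : ℝ) / n + ((S.card : ℝ) - 1) * c n k := by
  have hcard1 : (1 : ℝ) ≤ (S.card : ℝ) := by exact_mod_cast hm
  have hc0 : 0 ≤ c n k := Real.sqrt_nonneg _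
  have hr0 : 0 ≤ (k : ℝ) / n + ((S.card : ℝ) - 1) * c n k := by
    have h1 : 0 ≤ (k : ℝ) / n := by positivity
    have h2 : 0 ≤ ((S.card : ℝ) - 1) * c n k := mul_nonneg (by linarith) hc0
    linarith
  refine ContinuousLinearMap.opNorm_le_bound _ hr0 fun y => ?_
  set x : Fin k → ℝ := WithLp.equiv 2 (Fin k → ℝ) y with hx_def
  have hy : y = (WithLp.equiv 2 (Fin k → ℝ)).symm x := by
    rw [hx_def, Equiv.symm_apply_apply]
  set A : Matrix (Fin k) (Fin k) ℝ := Vᵀ * diagS S * V with hA_def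
  rw [hy, toEuclideanCLM_apply_symm, euclidean_norm_symm, euclidean_norm_symm]
  -- the truncated coefficient vector
  set u : Fin n → ℝ := fun i => if i ∈ S then (V *ᵥ x) i else 0 with hu_def
  have hu0 : ∀ i, i ∉ S → u i = 0 := fun i hi => by simp [hu_def, hi]
  have hAx : A *ᵥ x = Vᵀ *ᵥ u := by
    have h1 : A *ᵥ x = Vᵀ *ᵥ (diagS S *ᵥ (V *ᵥ x)) := by
      rw [Matrix.mulVec_mulVec, Matrix.mulVec_mulVec, hA_def, Matrix.mul_assoc]
    have h2 : diagS S *ᵥ (V *ᵥ x) = u := by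
      funext i
      rw [diagS, Matrix.mulVec_diagonal]
      by_cases h : i ∈ S <;> simp [hu_def, h]
    rw [h1, h2]
  set P : ℝ := ∑ t, ((A *ᵥ x) t) ^ 2 with hP_def
  set X : ℝ := ∑ t, (x t) ^ 2 with hX_def
  have hP0 : 0 ≤ P := Finset.sum_nonneg fun t _ => sq_nonneg _
  have hX0 : 0 ≤ X := Finset.sum_nonneg fun t _ => sq_nonneg _
  have hPquad : P ≤ ((k : ℝ) / n + ((S.card : ℝ) - 1) * c n k) * ∑ i, (u i) ^ 2 := by
    have : P = ∑ i, ∑ j, u i * u j * (V * Vᵀ) i j := by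
      rw [hP_def, hAx]; exact sum_sq_vecMul V u
    rw [this, hgram]
    exact quadform_le Q hdiag hoff _ _ hc0 S u hu0
  have hUsum : ∑ i, (u i) ^ 2 = ∑ t, (A *ᵥ x) t * x t := by
    have h1 : ∑ i, (u i) ^ 2 = ∑ i, u i * (V *ᵥ x) i := by
      refine Finset.sum_congr rfl fun i _ => ?_
      by_cases h : i ∈ S <;> simp [hu_def, h, pow_two]
    rw [h1, hAx]
    simp only [Matrix.mulVec, dotProduct, Matrix.transpose_apply, Finset.sum_mul,
      Finset.mul_sum]
    rw [Finset.sum_comm]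
    refine Finset.sum_congr rfl fun i _ => Finset.sum_congr rfl fun t _ => by ring
  have hCS : (∑ t, (A *ᵥ x) t * x t) ^ 2 ≤ P * X :=
    Finset.sum_mul_sq_le_sq_mul_sq Finset.univ _ _
  have hPfin : P ≤ ((k : ℝ) / n + ((S.card : ℝ) - 1) * c n k) ^ 2 * X := by
    rcases eq_or_lt_of_le hP0 with h0 | hPpos
    · rw [← h0]; positivity
    · have hu2 : 0 ≤ ∑ i, (u i) ^ 2 := Finset.sum_nonneg fun i _ => sq_nonneg _
      rw [← hUsum] at hCS
      have hrs0 : 0 ≤ ((k : ℝ) / n + ((S.card : ℝ) - 1) * c n k) * ∑ i, (u i) ^ 2 :=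
        hP0.trans hPquad
      have hsq : P * P ≤ (((k : ℝ) / n + ((S.card : ℝ) - 1) * c n k) * ∑ i, (u i) ^ 2) *
          (((k : ℝ) / n + ((S.card : ℝ) - 1) * c n k) * ∑ i, (u i) ^ 2) :=
        mul_le_mul hPquad hPquad hP0 hrs0
      have hmul := mul_le_mul_of_nonneg_left hCS
        (sq_nonneg ((k : ℝ) / n + ((S.card : ℝ) - 1) * c n k))
      nlinarith [hsq, hmul, hPpos, hX0]
  calc Real.sqrt P
      ≤ Real.sqrt (((k : ℝ) / n + ((S.card : ℝ) - 1) * c n k) ^ 2 * X) :=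
        Real.sqrt_le_sqrt hPfin
    _ = ((k : ℝ) / n + ((S.card : ℝ) - 1) * c n k) * Real.sqrt X := by
        rw [Real.sqrt_mul (sq_nonneg _), Real.sqrt_sq hr0]

/-- Lower bound: the error norm is attained on a complete-bipartite pattern. -/
private lemma opNorm_err_ge {n k : ℕ} (V : Matrix (Fin n) (Fin k) ℝ)
    (Q : Matrix (Fin n) (Fin n) ℝ) (hdiag : ∀ i, Q i i = 0)
    (hgram : V * Vᵀ = ((k : ℝ) / n) • (1 : Matrix (Fin n) (Fin n) ℝ) + c n k • Q)
    (S : Finset (Fin n)) (hm : 0 < S.card)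
    (ε : Fin n → ℝ) (hε : ∀ i, ε i = 1 ∨ ε i = -1)
    (hpat : ∀ i ∈ S, ∀ j ∈ S, i ≠ j → Q i j = ε i * ε j)
    (hkn : 0 < (k : ℝ) / n) :
    (k : ℝ) / n + ((S.card : ℝ) - 1) * c n k ≤ opNorm (Vᵀ * diagS S * V) := by
  have hcard1 : (1 : ℝ) ≤ (S.card : ℝ) := by exact_mod_cast hm
  have hc0 : 0 ≤ c n k := Real.sqrt_nonneg _
  set r : ℝ := (k : ℝ) / n + ((S.card : ℝ) - 1) * c n k with hr_def
  have hr0 : 0 < r := by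
    have h2 : 0 ≤ ((S.card : ℝ) - 1) * c n k := mul_nonneg (by linarith) hc0
    have := hkn
    rw [hr_def]
    linarith
  set x : Fin n → ℝ := fun i => if i ∈ S then ε i else 0 with hx_def
  have hGx : ∀ i ∈ S, ((V * Vᵀ) *ᵥ x) i = r * x i := by
    intro i hi
    have expand : ((V * Vᵀ) *ᵥ x) i = ∑ j ∈ S, (V * Vᵀ) i j * ε j := by
      simp only [Matrix.mulVec, dotProduct, hx_def]
      rw [← Finset.sum_subset (Finset.subset_univ S)
        (fun j _ hj => by rw [if_neg hj]; ring)]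
      exact Finset.sum_congr rfl fun j hj => by rw [if_pos hj]
    rw [expand, hgram]
    have term : ∀ j ∈ S, (((k : ℝ) / n) • (1 : Matrix (Fin n) (Fin n) ℝ) + c n k • Q) i j * ε j
        = (if i = j then ((k : ℝ) / n) * ε j else 0) + c n k * (Q i j * ε j) := by
      intro j _
      simp only [Matrix.add_apply, Matrix.smul_apply, Matrix.one_apply, smul_eq_mul]
      by_cases h : i = j <;> simp [h] <;> ring
    rw [Finset.sum_congr rfl term, Finset.sum_add_distrib,
      Finset.sum_ite_eq S i (fun j => ((k : ℝ) / n) * ε j), if_pos hi, ← Finset.mul_sum]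
    have hQsum : ∑ j ∈ S, Q i j * ε j = ((S.card : ℝ) - 1) * ε i := by
      rw [← Finset.add_sum_erase S (fun j => Q i j * ε j) hi, hdiag i]
      have : ∀ j ∈ S.erase i, Q i j * ε j = ε i := by
        intro j hj
        have hji := Finset.mem_erase.mp hj
        rw [hpat i hi j hji.2 (Ne.symm hji.1)]
        have h2 : ε j * ε j = 1 := by rcases hε j with h | h <;> rw [h] <;> norm_num
        calc ε i * ε j * ε j = ε i * (ε j * ε j) := by ring
          _ = ε i := by rw [h2, mul_one]
      rw [Finset.sum_congr rfl this, Finset.sum_const, Finset.card_erase_of_mem hi]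
      have : ((S.card - 1 : ℕ) : ℝ) = (S.card : ℝ) - 1 := by
        have := hm
        push_cast [Nat.cast_sub (by omega : 1 ≤ S.card)]
        ring
      rw [nsmul_eq_mul, this]
      ring
    rw [hQsum]
    have hxi : x i = ε i := by rw [hx_def]; exact if_pos hi
    rw [hxi, hr_def]
    ring
  have hDGx : diagS S *ᵥ ((V * Vᵀ) *ᵥ x) = r • x := by
    funext i
    rw [diagS, Matrix.mulVec_diagonal]
    by_cases h : i ∈ S
    · rw [if_pos h, one_mul, hGx i h]; rfl
    · rw [if_neg h]
      have hxi : x i = 0 := by rw [hx_def]; exact if_neg h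
      simp [hxi]
  set y : Fin k → ℝ := Vᵀ *ᵥ x with hy_def
  have hAy : (Vᵀ * diagS S * V) *ᵥ y = r • y := by
    calc (Vᵀ * diagS S * V) *ᵥ y = (Vᵀ * diagS S * V * Vᵀ) *ᵥ x := by
          rw [hy_def, Matrix.mulVec_mulVec]
      _ = (Vᵀ * diagS S * (V * Vᵀ)) *ᵥ x := by rw [Matrix.mul_assoc (Vᵀ * diagS S) V Vᵀ]
      _ = Vᵀ *ᵥ (diagS S *ᵥ ((V * Vᵀ) *ᵥ x)) := by
          rw [Matrix.mulVec_mulVec, Matrix.mulVec_mulVec, Matrix.mul_assoc]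
      _ = Vᵀ *ᵥ (r • x) := by rw [hDGx]
      _ = r • y := by rw [Matrix.mulVec_smul, hy_def]
  have hy0 : y ≠ 0 := by
    intro h0
    obtain ⟨i0, hi0⟩ := Finset.card_pos.mp hm
    have h1 : (V * Vᵀ) *ᵥ x = V *ᵥ y := by rw [hy_def, Matrix.mulVec_mulVec]
    have h2 : diagS S *ᵥ ((V * Vᵀ) *ᵥ x) = 0 := by
      rw [h1, h0, Matrix.mulVec_zero, Matrix.mulVec_zero]
    rw [hDGx] at h2
    have h3 : r * x i0 = 0 := by
      have := congrFun h2 i0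
      simpa using this
    have hxi : x i0 = ε i0 := by rw [hx_def]; exact if_pos hi0
    rcases hε i0 with h | h <;> rw [hxi, h] at h3 <;> nlinarith [hr0]
  -- pass to the continuous linear map
  set y' : EuclideanSpace ℝ (Fin k) := (WithLp.equiv 2 (Fin k → ℝ)).symm y with hy'_def
  have hy'0 : y' ≠ 0 := by
    intro h
    apply hy0
    have := congrArg (WithLp.equiv 2 (Fin k → ℝ)) h
    simpa [hy'_def] using this
  have hTy : Matrix.toEuclideanCLM (𝕜 := ℝ) (Vᵀ * diagS S * V) y'
      = (WithLp.equiv 2 (Fin k → ℝ)).symm (r • y) := by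
    rw [hy'_def, toEuclideanCLM_apply_symm, hAy]
  have hnorm : ‖Matrix.toEuclideanCLM (𝕜 := ℝ) (Vᵀ * diagS S * V) y'‖ = r * ‖y'‖ := by
    rw [hTy, euclidean_norm_symm, hy'_def, euclidean_norm_symm]
    have : ∑ t, ((r • y) t) ^ 2 = r ^ 2 * ∑ t, (y t) ^ 2 := by
      rw [Finset.mul_sum]
      refine Finset.sum_congr rfl fun t _ => ?_
      simp [Pi.smul_apply, smul_eq_mul]
      ring
    rw [this, Real.sqrt_mul (sq_nonneg r), Real.sqrt_sq hr0.le]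
  have hle := ContinuousLinearMap.le_opNorm (Matrix.toEuclideanCLM (𝕜 := ℝ) (Vᵀ * diagS S * V)) y'
  rw [hnorm] at hle
  have hy'pos : 0 < ‖y'‖ := norm_pos_iff.mpr hy'0
  rw [opNorm]
  exact le_of_mul_le_mul_right (by linarith) hy'pos

/-- Existence of 5 rows of a graph Hadamard matrix on which `H i j = ε i * ε j`. -/
private lemma exists_pattern (n : ℕ) (hn : 48 ≤ n)
    (H : Matrix (Fin n) (Fin n) ℝ) (hsym : Hᵀ = H)
    (hent : ∀ i j, H i j = 1 ∨ H i j = -1) (hdiag : ∀ i, H i i = 1)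
    (hHad : H * H = (n : ℝ) • (1 : Matrix (Fin n) (Fin n) ℝ)) :
    ∃ (S : Finset (Fin n)) (ε : Fin n → ℝ), S.card = 5 ∧
      (∀ i, ε i = 1 ∨ ε i = -1) ∧
      ∀ i ∈ S, ∀ j ∈ S, i ≠ j → H i j = ε i * ε j := by
  have hn0 : 0 < n := by omega
  set z : Fin n := ⟨0, hn0⟩ with hz_def
  set a : Fin n := ⟨1, by omega⟩ with ha_def
  have hza : z ≠ a := by
    intro h
    have := congrArg Fin.val h
    simp [hz_def, ha_def] at this
  have hHsymm : ∀ i j, H i j = H j i := by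
    intro i j
    have := congrFun (congrFun hsym j) i
    simpa [Matrix.transpose_apply] using this
  set ε : Fin n → ℝ := fun i => H z i with hε_def
  have hε : ∀ i, ε i = 1 ∨ ε i = -1 := fun i => hent z i
  have hε2 : ∀ i, ε i * ε i = 1 := fun i => by rcases hε i with h | h <;> rw [h] <;> norm_num
  set E : Fin n → Fin n → ℝ := fun i j => ε i * ε j * H i j with hE_def
  have hEsymm : ∀ i j, E i j = E j i := by
    intro i j
    simp only [hE_def]
    rw [hHsymm i j]
    ring
  have hEpm : ∀ i j, E i j = 1 ∨ E i j = -1 := by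
    intro i j
    rcases hε i with h1 | h1 <;> rcases hε j with h2 | h2 <;> rcases hent i j with h3 | h3 <;>
      simp only [hE_def, h1, h2, h3] <;> norm_num
  have hEdiag : ∀ i, E i i = 1 := by
    intro i
    simp only [hE_def, hdiag i, mul_one]
    exact hε2 i
  have hEz : ∀ j, E z j = 1 := by
    intro j
    simp only [hE_def, hε_def]
    rw [hdiag z]
    rcases hent z j with h | h <;> rw [h] <;> norm_num
  have hEz' : ∀ j, E j z = 1 := fun j => (hEsymm j z).trans (hEz j)
  have horth : ∀ i j, ∑ v, H i v * H j v = if i = j then (n : ℝ) else 0 := by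
    intro i j
    have h1 := congrFun (congrFun hHad i) j
    rw [Matrix.mul_apply] at h1
    calc ∑ v, H i v * H j v = ∑ v, H i v * H v j := by
          exact Finset.sum_congr rfl fun v _ => by rw [hHsymm j v]
      _ = ((n : ℝ) • (1 : Matrix (Fin n) (Fin n) ℝ)) i j := h1
      _ = if i = j then (n : ℝ) else 0 := by
          by_cases h : i = j <;> simp [Matrix.smul_apply, Matrix.one_apply, h]
  have horthE : ∀ i j, ∑ v, E i v * E j v = if i = j then (n : ℝ) else 0 := by
    intro i j
    have hterm : ∀ v, E i v * E j v = (ε i * ε j) * (H i v * H j v) := by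
      intro v
      simp only [hE_def]
      calc ε i * ε v * H i v * (ε j * ε v * H j v)
          = (ε i * ε j) * (H i v * H j v) * (ε v * ε v) := by ring
        _ = (ε i * ε j) * (H i v * H j v) := by rw [hε2 v, mul_one]
    rw [Finset.sum_congr rfl fun v _ => hterm v, ← Finset.mul_sum, horth]
    by_cases h : i = j
    · subst h; simp [hε2 i]
    · simp [h]
  have hrow : ∀ i, i ≠ z → ∑ v, E i v = 0 := by
    intro i hi
    have h1 := horthE i z
    rw [if_neg hi] at h1
    calc ∑ v, E i v = ∑ v, E i v * E z v := by
          exact Finset.sum_congr rfl fun v _ => by rw [hEz v, mul_one]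
      _ = 0 := h1
  -- counting lemmas
  have count2 : ∀ i j, i ≠ j → i ≠ z → j ≠ z →
      ((Finset.univ.filter fun v => E i v = 1 ∧ E j v = 1).card : ℝ) * 4 = n := by
    intro i j hij hiz hjz
    have expand : ∀ v, (1 + E i v) * (1 + E j v)
        = if E i v = 1 ∧ E j v = 1 then 4 else 0 := by
      intro v
      rcases hEpm i v with h1 | h1 <;> rcases hEpm j v with h2 | h2 <;>
        rw [h1, h2] <;> norm_num
    have hsum : ∑ v, (1 + E i v) * (1 + E j v) = (n : ℝ) := by
      have hterm : ∀ v, (1 + E i v) * (1 + E j v)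
          = 1 + E i v + E j v + E i v * E j v := fun v => by ring
      rw [Finset.sum_congr rfl fun v _ => hterm v, Finset.sum_add_distrib,
        Finset.sum_add_distrib, Finset.sum_add_distrib, hrow i hiz, hrow j hjz,
        horthE i j, if_neg hij]
      simp
    rw [Finset.sum_congr rfl fun v _ => expand v, Finset.sum_ite, Finset.sum_const,
      Finset.sum_const_zero, add_zero, nsmul_eq_mul] at hsum
    linarith [hsum]
  have count1 : ∀ i, i ≠ z →
      ((Finset.univ.filter fun v => E i v = 1).card : ℝ) * 2 = n := by
    intro i hiz
    have expand : ∀ v, 1 + E i v = if E i v = 1 then 2 else 0 := by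
      intro v
      rcases hEpm i v with h1 | h1 <;> rw [h1] <;> norm_num
    have hsum : ∑ v, (1 + E i v) = (n : ℝ) := by
      rw [Finset.sum_add_distrib, hrow i hiz]
      simp
    rw [Finset.sum_congr rfl fun v _ => expand v, Finset.sum_ite, Finset.sum_const,
      Finset.sum_const_zero, add_zero, nsmul_eq_mul] at hsum
    linarith [hsum]
  have haz : a ≠ z := Ne.symm hza
  -- find b
  obtain ⟨b, hbz, hba, hEab⟩ : ∃ b, b ≠ z ∧ b ≠ a ∧ E a b = 1 := by
    set P1 := Finset.univ.filter fun v => E a v = 1 with hP1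
    have hc1 : (P1.card : ℝ) * 2 = n := count1 a haz
    have hc1' : P1.card * 2 = n := by exact_mod_cast hc1
    have hple : (({z, a} : Finset (Fin n))).card ≤ 2 := by
      apply Finset.card_insert_le _ _ |>.trans
      simp
    have hsd : 22 ≤ (P1 \ {z, a}).card := by
      have h1 : P1.card - ({z, a} : Finset (Fin n)).card ≤ (P1 \ {z, a}).card :=
        Finset.le_card_sdiff _ _
      omega
    have : (P1 \ {z, a}).Nonempty := Finset.card_pos.mp (by omega)
    obtain ⟨b, hb⟩ := this
    rw [Finset.mem_sdiff, hP1, Finset.mem_filter] at hb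
    refine ⟨b, ?_, ?_, hb.1.2⟩
    · intro h; exact hb.2 (by simp [h])
    · intro h; exact hb.2 (by simp [h])
  have hEba : E b a = 1 := (hEsymm b a).trans hEab
  -- the common "+1" set
  set P2 := Finset.univ.filter (fun v => E a v = 1 ∧ E b v = 1) with hP2
  set T := P2 \ {z, a, b} with hT_def
  have hsub : ({z, a, b} : Finset (Fin n)) ⊆ P2 := by
    intro v hv
    rw [hP2, Finset.mem_filter]
    refine ⟨Finset.mem_univ v, ?_⟩
    simp only [Finset.mem_insert, Finset.mem_singleton] at hv
    rcases hv with h | h | h <;> rw [h]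
    · exact ⟨hEz' a, hEz' b⟩
    · exact ⟨hEdiag a, hEba⟩
    · exact ⟨hEab, hEdiag b⟩
  have hzab_card : ({z, a, b} : Finset (Fin n)).card = 3 := by
    rw [Finset.card_insert_of_notMem (by simp [hza, Ne.symm hbz]),
      Finset.card_insert_of_notMem (by simp [Ne.symm hba]), Finset.card_singleton]
  have hP2card : (P2.card : ℝ) * 4 = n := count2 a b (Ne.symm hba) haz hbz
  have hTcard : (T.card : ℝ) * 4 = (n : ℝ) - 12 := by
    rw [hT_def, Finset.card_sdiff_of_subset hsub, hzab_card]
    have h3 : 3 ≤ P2.card := by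
      calc 3 = ({z, a, b} : Finset (Fin n)).card := hzab_card.symm
        _ ≤ P2.card := Finset.card_le_card hsub
    push_cast [Nat.cast_sub h3]
    linarith [hP2card]
  have hT9 : 9 ≤ T.card := by
    have : (9 : ℝ) ≤ (T.card : ℝ) := by
      have hn' : (48 : ℝ) ≤ (n : ℝ) := by exact_mod_cast hn
      linarith [hTcard]
    exact_mod_cast this
  have hTmem : ∀ v ∈ T, v ≠ z ∧ v ≠ a ∧ v ≠ b ∧ E a v = 1 ∧ E b v = 1 := by
    intro v hv
    rw [hT_def, Finset.mem_sdiff, hP2, Finset.mem_filter] at hv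
    have hnot := hv.2
    simp only [Finset.mem_insert, Finset.mem_singleton] at hnot
    push_neg at hnot
    exact ⟨hnot.1, hnot.2.1, hnot.2.2, hv.1.2.1, hv.1.2.2⟩
  by_cases hcd : ∃ cc ∈ T, ∃ d ∈ T, cc ≠ d ∧ E cc d = 1
  · obtain ⟨cc, hcT, d, hdT, hccd, hEcd⟩ := hcd
    obtain ⟨hcz, hca, hcb, hEac, hEbc⟩ := hTmem cc hcT
    obtain ⟨hdz, hda, hdb, hEad, hEbd⟩ := hTmem d hdT
    have hEca : E cc a = 1 := (hEsymm cc a).trans hEac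
    have hEcb : E cc b = 1 := (hEsymm cc b).trans hEbc
    have hEda : E d a = 1 := (hEsymm d a).trans hEad
    have hEdb : E d b = 1 := (hEsymm d b).trans hEbd
    have hEdc : E d cc = 1 := (hEsymm d cc).trans hEcd
    refine ⟨{z, a, b, cc, d}, ε, ?_, hε, ?_⟩
    · rw [Finset.card_insert_of_notMem (by simp [hza, Ne.symm hbz, Ne.symm hcz, Ne.symm hdz]),
        Finset.card_insert_of_notMem (by simp [Ne.symm hba, Ne.symm hca, Ne.symm hda]),
        Finset.card_insert_of_notMem (by simp [Ne.symm hcb, Ne.symm hdb]),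
        Finset.card_insert_of_notMem (by simp [hccd]), Finset.card_singleton]
    · intro i hi j hj hij
      have key : E i j = 1 → H i j = ε i * ε j := by
        intro h
        have expand : ε i * ε j * E i j = H i j := by
          simp only [hE_def]
          calc ε i * ε j * (ε i * ε j * H i j)
              = (ε i * ε i) * (ε j * ε j) * H i j := by ring
            _ = H i j := by rw [hε2 i, hε2 j]; ring
        rw [← expand, h, mul_one]
      apply key
      simp only [Finset.mem_insert, Finset.mem_singleton] at hi hj
      rcases hi with rfl | rfl | rfl | rfl | rfl <;> rcases hj with rfl | rfl | rfl | rfl | rfl <;>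
        first
          | exact absurd rfl hij
          | exact hEz _
          | exact hEz' _
          | assumption
  · exfalso
    push_neg at hcd
    have hneg : ∀ cc ∈ T, ∀ d ∈ T, cc ≠ d → E cc d = -1 := by
      intro cc hcc d hd hccd
      rcases hEpm cc d with h | h
      · exact absurd h (hcd cc hcc d hd hccd)
      · exact h
    set u : Fin n → ℝ := fun v => if v ∈ T then 1 else 0 with hu_def
    have husq : ∑ i, (u i) ^ 2 = (T.card : ℝ) := by
      have hterm : ∀ i, (u i) ^ 2 = if i ∈ T then (1 : ℝ) else 0 := by
        intro i; by_cases h : i ∈ T <;> simp [hu_def, h]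
      rw [Finset.sum_congr rfl fun i _ => hterm i, Finset.sum_ite_mem, Finset.univ_inter,
        Finset.sum_const, nsmul_eq_mul, mul_one]
    have hinner : ∀ i ∈ T, ∑ j, E i j * u j = 2 - (T.card : ℝ) := by
      intro i hiT
      have h1 : ∑ j, E i j * u j = ∑ j ∈ T, E i j := by
        simp only [hu_def, mul_ite, mul_one, mul_zero]
        rw [Finset.sum_ite_mem, Finset.univ_inter]
      rw [h1, ← Finset.add_sum_erase T (fun j => E i j) hiT, hEdiag i]
      have h2 : ∀ j ∈ T.erase i, E i j = -1 := by
        intro j hj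
        have hji := Finset.mem_erase.mp hj
        exact hneg i hiT j hji.2 (Ne.symm hji.1)
      rw [Finset.sum_congr rfl h2, Finset.sum_const, Finset.card_erase_of_mem hiT,
        nsmul_eq_mul]
      have hT1 : 1 ≤ T.card := by omega
      push_cast [Nat.cast_sub hT1]
      ring
    have hquad : ∑ i, ∑ j, u i * u j * E i j = (T.card : ℝ) * (2 - (T.card : ℝ)) := by
      have h1 : ∀ i, ∑ j, u i * u j * E i j = u i * ∑ j, E i j * u j := by
        intro i
        rw [Finset.mul_sum]
        exact Finset.sum_congr rfl fun j _ => by ring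
      rw [Finset.sum_congr rfl fun i _ => h1 i]
      have h2 : ∑ i, u i * ∑ j, E i j * u j = ∑ i ∈ T, ∑ j, E i j * u j := by
        simp only [hu_def, ite_mul, one_mul, zero_mul]
        rw [Finset.sum_ite_mem, Finset.univ_inter]
      rw [h2, Finset.sum_congr rfl hinner, Finset.sum_const, nsmul_eq_mul]
    -- positivity of the quadratic form of E + √n
    have hsqrtn : Real.sqrt n ^ 2 = (n : ℝ) := Real.sq_sqrt (Nat.cast_nonneg n)
    have hpos : 0 ≤ 2 * (n : ℝ) * (T.card : ℝ)
        + 2 * Real.sqrt n * ((T.card : ℝ) * (2 - (T.card : ℝ))) := by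
      have hnn : 0 ≤ ∑ i, ((∑ j, E i j * u j) + Real.sqrt n * u i) ^ 2 :=
        Finset.sum_nonneg fun i _ => sq_nonneg _
      have hexp : ∀ i, ((∑ j, E i j * u j) + Real.sqrt n * u i) ^ 2
          = (∑ j, E i j * u j) ^ 2 + 2 * Real.sqrt n * (u i * ∑ j, E i j * u j)
            + (n : ℝ) * (u i) ^ 2 := by
        intro i
        have : ((∑ j, E i j * u j) + Real.sqrt n * u i) ^ 2
            = (∑ j, E i j * u j) ^ 2 + 2 * Real.sqrt n * (u i * ∑ j, E i j * u j)
              + Real.sqrt n ^ 2 * (u i) ^ 2 := by ring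
        rw [this, hsqrtn]
      rw [Finset.sum_congr rfl fun i _ => hexp i, Finset.sum_add_distrib,
        Finset.sum_add_distrib] at hnn
      have hS1 : ∑ i, (∑ j, E i j * u j) ^ 2 = (n : ℝ) * ∑ j, (u j) ^ 2 := by
        apply sum_sq_rows E (n : ℝ) _ u
        intro i j
        have := horthE i j
        calc ∑ v, E v i * E v j = ∑ v, E i v * E j v := by
              exact Finset.sum_congr rfl fun v _ => by rw [hEsymm v i, hEsymm v j]
          _ = if i = j then (n : ℝ) else 0 := this
      have hS2 : ∑ i, u i * ∑ j, E i j * u j = ∑ i, ∑ j, u i * u j * E i j := by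
        refine Finset.sum_congr rfl fun i _ => ?_
        rw [Finset.mul_sum]
        exact Finset.sum_congr rfl fun j _ => by ring
      rw [← Finset.mul_sum, ← Finset.mul_sum] at hnn
      rw [hS1, hS2, hquad, husq] at hnn
      linarith
    -- derive the contradiction
    have hTpos : (0 : ℝ) < (T.card : ℝ) := by
      have : (9 : ℝ) ≤ (T.card : ℝ) := by exact_mod_cast hT9
      linarith
    have hs0 : 0 ≤ Real.sqrt n := Real.sqrt_nonneg n
    have hn' : (48 : ℝ) ≤ (n : ℝ) := by exact_mod_cast hn
    have key1 : Real.sqrt n * (T.card : ℝ) ≤ (n : ℝ) + 2 * Real.sqrt n := by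
      nlinarith [hpos, hTpos]
    have key2 : Real.sqrt n * ((n : ℝ) - 20) ≤ 4 * (n : ℝ) := by
      nlinarith [key1, hTcard, hs0]
    have key3 : 4 * Real.sqrt n < (n : ℝ) - 20 := by
      nlinarith [sq_nonneg (Real.sqrt n - 7), hsqrtn, hn']
    have hspos : 0 < Real.sqrt n := Real.sqrt_pos.mpr (by linarith)
    nlinarith [key2, key3, hspos, hsqrtn]

theorem statement18 (n : ℕ) (hn : 48 ≤ n)
    (H : Matrix (Fin n) (Fin n) ℝ) (hsym : Hᵀ = H)
    (hent : ∀ i j, H i j = 1 ∨ H i j = -1) (hdiag : ∀ i, H i i = 1)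
    (hHad : H * H = (n : ℝ) • (1 : Matrix (Fin n) (Fin n) ℝ))
    (k : ℕ) (hk : (k : ℝ) = ((n : ℝ) + Real.sqrt n) / 2)
    (F : TwoUniformFrame n k) (hQ : F.Q = H - 1) :
    HasInducedCompleteBipartite (frameGraph F) 5 ∧
    ∀ m : ℕ, 1 ≤ m → m ≤ 5 →
      errInf F.V m = (k : ℝ) / n + ((m : ℝ) - 1) * c n k := by
  obtain ⟨S₅, ε, hcard5, hε, hpat⟩ := exists_pattern n hn H hsym hent hdiag hHad
  have hQoff : ∀ i ∈ S₅, ∀ j ∈ S₅, i ≠ j → F.Q i j = ε i * ε j := by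
    intro i hi j hj hij
    rw [hQ, Matrix.sub_apply, Matrix.one_apply, if_neg hij, sub_zero]
    exact hpat i hi j hj hij
  have hn0 : 0 < n := by omega
  have hkpos : 0 < (k : ℝ) / n := by
    have h1 : (0 : ℝ) < n := by exact_mod_cast hn0
    have h2 : (0 : ℝ) < (k : ℝ) := by
      rw [hk]
      have := Real.sqrt_nonneg (n : ℝ)
      linarith
    positivity
  constructor
  · refine ⟨S₅, hcard5, {v : ((S₅ : Finset (Fin n)) : Set (Fin n)) | ε v.1 = 1}, ?_⟩
    intro i j
    show ((i : Fin n) ≠ (j : Fin n) ∧ F.Q i j = -1) ↔ _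
    by_cases hij : (i : Fin n) = (j : Fin n)
    · have hij' : i = j := Subtype.ext hij
      subst hij'
      simp
    · rw [hQoff _ (Finset.mem_coe.mp i.2) _ (Finset.mem_coe.mp j.2) hij]
      simp only [Set.mem_setOf_eq, ne_eq, hij, not_false_iff, true_and]
      rcases hε i.1 with h1 | h1 <;> rcases hε j.1 with h2 | h2 <;> rw [h1, h2] <;> norm_num
  · intro m hm1 hm5
    obtain ⟨S, hSsub, hScard⟩ := Finset.exists_subset_card_eq (s := S₅) (n := m) (by rw [hcard5]; exact hm5)
    show sSup _ = _
    apply IsGreatest.csSup_eq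
    constructor
    · refine ⟨S, hScard, ?_⟩
      have hle := opNorm_err_le F.V F.Q F.diag F.offdiag F.gram S (by rw [hScard]; exact hm1)
      have hge := opNorm_err_ge F.V F.Q F.diag F.gram S (by rw [hScard]; omega) ε hε
        (fun i hi j hj hij => hQoff i (hSsub hi) j (hSsub hj) hij) hkpos
      rw [hScard] at hle hge
      exact (le_antisymm hle hge).symm
    · rintro xx ⟨S', hS'card, rfl⟩
      have hle := opNorm_err_le F.V F.Q F.diag F.offdiag F.gram S' (by rw [hS'card]; exact hm1)
      rw [hS'card] at hle
      exact hle

end FramesErasures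
end
end
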